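/- arXiv:1311.0341 — 8 statements merged into one kernel-verified Lean document; each statement's English description precedes it below -/
import Mathlib

section
/- For all 3×3 complex matrices X and Y, and all indices a,b ∈ {1,2,3}, one has (1/2)·X_c^m Y_d^n ε_{amn} ε^{bcd} = (X*Y)_a^b, where repeated indices c,d,m,n are summed. (This expresses the Freudenthal product as a double Levi-Civita contraction.) -/
open Matrix BigOperators

/-- 3×3 complex matrices. -/
abbrev Mat3 := Matrix (Fin 3) (Fin 3) ℂ

/-- Sign of an integer, valued in ℤ. -/
def sgnZ (n : ℤ) : ℤ := if 0 < n then 1 else if n < 0 then -1 else 0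

/-- The Levi-Civita symbol on `Fin 3`. -/
def eps (a b c : Fin 3) : ℤ :=
  sgnZ ((b : ℤ) - (a : ℤ)) * sgnZ ((c : ℤ) - (a : ℤ)) * sgnZ ((c : ℤ) - (b : ℤ))

/-- The Jordan product X∘Y = (XY+YX)/2. -/
noncomputable def jord (X Y : Mat3) : Mat3 := (1/2 : ℂ) • (X * Y + Y * X)

/-- The Freudenthal product
X*Y = X∘Y − (1/2)((tr X)Y + (tr Y)X) + (1/2)((tr X)(tr Y) − tr(X∘Y))·I. -/
noncomputable def freud (X Y : Mat3) : Mat3 :=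
  jord X Y - (1/2 : ℂ) • (X.trace • Y + Y.trace • X)
    + (1/2 : ℂ) • (X.trace * Y.trace - (jord X Y).trace) • (1 : Mat3)

set_option maxHeartbeats 2000000 in
/-- (1/2)·X_c^m Y_d^n ε_{amn} ε^{bcd} = (X*Y)_a^b. -/
theorem stmt1 (X Y : Mat3) (a b : Fin 3) :
    (1/2 : ℂ) * ∑ c, ∑ d, ∑ m, ∑ n,
        X c m * Y d n * ((eps a m n : ℤ) : ℂ) * ((eps b c d : ℤ) : ℂ)
      = freud X Y a b := by
  have h2 : (⟨2, by norm_num⟩ : Fin 3) = 2 := rfl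
  fin_cases a <;> fin_cases b <;>
  · simp only [h2, Fin.sum_univ_three, freud, jord, Matrix.trace, Matrix.diag,
      Matrix.mul_apply, Matrix.one_apply, Matrix.smul_apply,
      Matrix.add_apply, Matrix.sub_apply, smul_eq_mul, Fin.isValue]
    norm_num [eps, sgnZ, Fin.isValue, Fin.reduceEq, reduceIte]
    try rw [if_neg (by decide)]
    ring
end

section
/- For all 3×3 complex matrices X and Y, and all indices a,b,c ∈ {1,2,3}, the cubie of the Freudenthal product satisfies (*(X*Y))_{abc} = (1/2)·(X_b^m Y_c^n − X_c^m Y_b^n)·ε_{amn}, where m,n are summed. -/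
open Matrix BigOperators

/-- The cubie of a 3×3 matrix: (*X)_{abc} = X_a^m ε_{mbc}. -/
noncomputable def cubie (X : Mat3) (a b c : Fin 3) : ℂ :=
  ∑ m, X a m * ((eps m b c : ℤ) : ℂ)

lemma fin3_mk2 : (⟨2, by norm_num⟩ : Fin 3) = 2 := rfl
lemma fin3_mk1 : (⟨1, by norm_num⟩ : Fin 3) = 1 := rfl
lemma fin3_mk0 : (⟨0, by norm_num⟩ : Fin 3) = 0 := rfl

lemma freud_apply (X Y : Mat3) (i j : Fin 3) :
    freud X Y i j = (1/2 : ℂ) * (∑ k, (X i k * Y k j + Y i k * X k j))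
      - (1/2 : ℂ) * ((∑ k, X k k) * Y i j + (∑ k, Y k k) * X i j)
      + (1/2 : ℂ) * ((∑ k, X k k) * (∑ k, Y k k)
          - (1/2 : ℂ) * ∑ l, ∑ k, (X l k * Y k l + Y l k * X k l)) * (if i = j then 1 else 0) := by
  simp [freud, jord, Matrix.trace, Matrix.mul_apply, Matrix.one_apply, Matrix.diag,
    Finset.mul_sum, Finset.sum_mul, Finset.sum_add_distrib, Fin.sum_univ_three]
  split_ifs <;> ring

set_option maxHeartbeats 1000000 in
/-- (*(X*Y))_{abc} = (1/2)·(X_b^m Y_c^n − X_c^m Y_b^n)·ε_{amn}. -/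
theorem stmt2 (X Y : Mat3) (a b c : Fin 3) :
    cubie (freud X Y) a b c
      = (1/2 : ℂ) * ∑ m, ∑ n, (X b m * Y c n - X c m * Y b n) * ((eps a m n : ℤ) : ℂ) := by
  fin_cases a <;> fin_cases b <;> fin_cases c <;>
    simp only [cubie, freud_apply, Fin.sum_univ_succ, Finset.sum_empty, Fin.isValue,
      fin3_mk0, fin3_mk1, fin3_mk2] <;>
    norm_num (config := { decide := true }) [eps, sgnZ] <;> ring
end

section
/- Let φ be a traceless 3×3 complex matrix and set φ' = −φ†, where † denotes conjugate transpose. Then for every 3×3 complex matrix X, the cubie of φX + Xφ† is given by (*(φX + Xφ†))_{abc} = φ_a^m (*X)_{mbc} + X_a^n φ'_b^m ε_{nmc} + X_a^n φ'_c^m ε_{nbm}, where repeated indices m,n ∈ {1,2,3} are summed. (This is the complex case of the action of e₆ on cubies.) -/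
open Matrix BigOperators

/-- for φ traceless and φ' = −φ†, the cubie of φX + Xφ† is
(*(φX + Xφ†))_{abc} = φ_a^m (*X)_{mbc} + X_a^n φ'_b^m ε_{nmc} + X_a^n φ'_c^m ε_{nbm}. -/
theorem stmt3 (φ : Mat3) (hφ : φ.trace = 0) (X : Mat3) (a b c : Fin 3) :
    cubie (φ * X + X * φᴴ) a b c
      = (∑ m, φ a m * cubie X m b c)
        + (∑ n, ∑ m, X a n * (-φᴴ) b m * ((eps n m c : ℤ) : ℂ))
        + (∑ n, ∑ m, X a n * (-φᴴ) c m * ((eps n b m : ℤ) : ℂ)) := by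
  have ht : φ 0 0 + φ 1 1 + φ 2 2 = 0 := by
    simpa [Matrix.trace, Fin.sum_univ_three] using hφ
  have ht' : (starRingEnd ℂ) (φ 0 0) + (starRingEnd ℂ) (φ 1 1)
      + (starRingEnd ℂ) (φ 2 2) = 0 := by
    have := congrArg (starRingEnd ℂ) ht
    simpa [map_add] using this
  have h2 : (⟨2, by norm_num⟩ : Fin 3) = 2 := rfl
  fin_cases b <;> fin_cases c <;>
    simp only [cubie, Matrix.mul_apply, Matrix.add_apply, Matrix.neg_apply,
      Matrix.conjTranspose_apply, Fin.sum_univ_three, h2, Fin.mk_zero, Fin.mk_one] <;>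
    norm_num [eps, sgnZ] <;>
    first |
      linear_combination ((0:ℂ) * X a 0 + 0 * X a 1 + 0 * X a 2) * ht' |
      linear_combination (-((0:ℂ) * X a 0 + 0 * X a 1 + 0 * X a 2)) * ht' |
      linear_combination ((0:ℂ) * X a 0 + 0 * X a 1 + 1 * X a 2) * ht' |
      linear_combination (-((0:ℂ) * X a 0 + 0 * X a 1 + 1 * X a 2)) * ht' |
      linear_combination ((0:ℂ) * X a 0 + 0 * X a 1 + 2 * X a 2) * ht' |
      linear_combination (-((0:ℂ) * X a 0 + 0 * X a 1 + 2 * X a 2)) * ht' |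
      linear_combination ((0:ℂ) * X a 0 + 1 * X a 1 + 0 * X a 2) * ht' |
      linear_combination (-((0:ℂ) * X a 0 + 1 * X a 1 + 0 * X a 2)) * ht' |
      linear_combination ((0:ℂ) * X a 0 + 1 * X a 1 + 1 * X a 2) * ht' |
      linear_combination (-((0:ℂ) * X a 0 + 1 * X a 1 + 1 * X a 2)) * ht' |
      linear_combination ((0:ℂ) * X a 0 + 1 * X a 1 + 2 * X a 2) * ht' |
      linear_combination (-((0:ℂ) * X a 0 + 1 * X a 1 + 2 * X a 2)) * ht' |
      linear_combination ((0:ℂ) * X a 0 + 2 * X a 1 + 0 * X a 2) * ht' |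
      linear_combination (-((0:ℂ) * X a 0 + 2 * X a 1 + 0 * X a 2)) * ht' |
      linear_combination ((0:ℂ) * X a 0 + 2 * X a 1 + 1 * X a 2) * ht' |
      linear_combination (-((0:ℂ) * X a 0 + 2 * X a 1 + 1 * X a 2)) * ht' |
      linear_combination ((0:ℂ) * X a 0 + 2 * X a 1 + 2 * X a 2) * ht' |
      linear_combination (-((0:ℂ) * X a 0 + 2 * X a 1 + 2 * X a 2)) * ht' |
      linear_combination ((1:ℂ) * X a 0 + 0 * X a 1 + 0 * X a 2) * ht' |
      linear_combination (-((1:ℂ) * X a 0 + 0 * X a 1 + 0 * X a 2)) * ht' |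
      linear_combination ((1:ℂ) * X a 0 + 0 * X a 1 + 1 * X a 2) * ht' |
      linear_combination (-((1:ℂ) * X a 0 + 0 * X a 1 + 1 * X a 2)) * ht' |
      linear_combination ((1:ℂ) * X a 0 + 0 * X a 1 + 2 * X a 2) * ht' |
      linear_combination (-((1:ℂ) * X a 0 + 0 * X a 1 + 2 * X a 2)) * ht' |
      linear_combination ((1:ℂ) * X a 0 + 1 * X a 1 + 0 * X a 2) * ht' |
      linear_combination (-((1:ℂ) * X a 0 + 1 * X a 1 + 0 * X a 2)) * ht' |
      linear_combination ((1:ℂ) * X a 0 + 1 * X a 1 + 1 * X a 2) * ht' |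
      linear_combination (-((1:ℂ) * X a 0 + 1 * X a 1 + 1 * X a 2)) * ht' |
      linear_combination ((1:ℂ) * X a 0 + 1 * X a 1 + 2 * X a 2) * ht' |
      linear_combination (-((1:ℂ) * X a 0 + 1 * X a 1 + 2 * X a 2)) * ht' |
      linear_combination ((1:ℂ) * X a 0 + 2 * X a 1 + 0 * X a 2) * ht' |
      linear_combination (-((1:ℂ) * X a 0 + 2 * X a 1 + 0 * X a 2)) * ht' |
      linear_combination ((1:ℂ) * X a 0 + 2 * X a 1 + 1 * X a 2) * ht' |
      linear_combination (-((1:ℂ) * X a 0 + 2 * X a 1 + 1 * X a 2)) * ht' |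
      linear_combination ((1:ℂ) * X a 0 + 2 * X a 1 + 2 * X a 2) * ht' |
      linear_combination (-((1:ℂ) * X a 0 + 2 * X a 1 + 2 * X a 2)) * ht' |
      linear_combination ((2:ℂ) * X a 0 + 0 * X a 1 + 0 * X a 2) * ht' |
      linear_combination (-((2:ℂ) * X a 0 + 0 * X a 1 + 0 * X a 2)) * ht' |
      linear_combination ((2:ℂ) * X a 0 + 0 * X a 1 + 1 * X a 2) * ht' |
      linear_combination (-((2:ℂ) * X a 0 + 0 * X a 1 + 1 * X a 2)) * ht' |
      linear_combination ((2:ℂ) * X a 0 + 0 * X a 1 + 2 * X a 2) * ht' |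
      linear_combination (-((2:ℂ) * X a 0 + 0 * X a 1 + 2 * X a 2)) * ht' |
      linear_combination ((2:ℂ) * X a 0 + 1 * X a 1 + 0 * X a 2) * ht' |
      linear_combination (-((2:ℂ) * X a 0 + 1 * X a 1 + 0 * X a 2)) * ht' |
      linear_combination ((2:ℂ) * X a 0 + 1 * X a 1 + 1 * X a 2) * ht' |
      linear_combination (-((2:ℂ) * X a 0 + 1 * X a 1 + 1 * X a 2)) * ht' |
      linear_combination ((2:ℂ) * X a 0 + 1 * X a 1 + 2 * X a 2) * ht' |
      linear_combination (-((2:ℂ) * X a 0 + 1 * X a 1 + 2 * X a 2)) * ht' |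
      linear_combination ((2:ℂ) * X a 0 + 2 * X a 1 + 0 * X a 2) * ht' |
      linear_combination (-((2:ℂ) * X a 0 + 2 * X a 1 + 0 * X a 2)) * ht' |
      linear_combination ((2:ℂ) * X a 0 + 2 * X a 1 + 1 * X a 2) * ht' |
      linear_combination (-((2:ℂ) * X a 0 + 2 * X a 1 + 1 * X a 2)) * ht' |
      linear_combination ((2:ℂ) * X a 0 + 2 * X a 1 + 2 * X a 2) * ht' |
      linear_combination (-((2:ℂ) * X a 0 + 2 * X a 1 + 2 * X a 2)) * ht'
end

section
/- Let A be a Hermitian 3×3 complex matrix, let Θ = Θ(0,0,A,0) (the 6×6 block matrix with A in the upper-right 3×3 block and zeros elsewhere), let X, Y be Hermitian 3×3 complex matrices, and let p, q ∈ ℝ. Then the symplectic action of Θ on P(X,Y,p,q) gives Θ·P(X,Y,p,q) = P(qA, 2·A*X, tr(A∘Y), 0). (Action of a null translation of the first kind.) -/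
open Matrix BigOperators

/-- Reduce an index in {1,...,6} to an index in {1,2,3}: for a "large" index
(value ≥ 4, i.e. `Fin 6` value ≥ 3) this is a−3; "small" indices are unchanged. -/
def lo (a : Fin 6) : Fin 3 := ⟨a.val % 3, Nat.mod_lt _ (by norm_num)⟩

/-- The totally antisymmetric rank-3 tensor P(X,Y,p,q) on indices in {1,...,6}:
its 000 cubie is p·ε, its 100 cubie is *Y, its 011 cubie is *X, its 111 cubie
is q·ε, and all other components are determined by total antisymmetry
(using that (*X)_{abc} is antisymmetric in its last two indices). -/
noncomputable def PT (X Y : Mat3) (p q : ℂ) : Fin 6 → Fin 6 → Fin 6 → ℂ := fun a b c =>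
  if a.val < 3 then
    if b.val < 3 then
      if c.val < 3 then p * ((eps (lo a) (lo b) (lo c) : ℤ) : ℂ)  -- (s,s,s)
      else cubie Y (lo c) (lo a) (lo b)                            -- (s,s,l) = +P_{cab}
    else
      if c.val < 3 then -(cubie Y (lo b) (lo a) (lo c))            -- (s,l,s) = −P_{bac}
      else cubie X (lo a) (lo b) (lo c)                            -- (s,l,l)
  else
    if b.val < 3 then
      if c.val < 3 then cubie Y (lo a) (lo b) (lo c)               -- (l,s,s)
      else -(cubie X (lo b) (lo a) (lo c))                         -- (l,s,l) = −P_{bac}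
    else
      if c.val < 3 then cubie X (lo c) (lo a) (lo b)               -- (l,l,s) = +P_{cab}
      else q * ((eps (lo a) (lo b) (lo c) : ℤ) : ℂ)                -- (l,l,l)

/-- The action of a 6×6 matrix Θ on a rank-3 tensor:
(Θ·P)_{abc} = Θ_a^m P_{mbc} + Θ_b^m P_{amc} + Θ_c^m P_{abm}. -/
noncomputable def act (Θ : Matrix (Fin 6) (Fin 6) ℂ) (P : Fin 6 → Fin 6 → Fin 6 → ℂ) :
    Fin 6 → Fin 6 → Fin 6 → ℂ := fun a b c =>
  (∑ m, Θ a m * P m b c) + (∑ m, Θ b m * P a m c) + (∑ m, Θ c m * P a b m)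

/-- The 6×6 block matrix Θ(φ,ρ,A,B) = [[φ − (ρ/3)I, A],[B, −φ† + (ρ/3)I]]. -/
noncomputable def ThetaM (φ : Mat3) (ρ : ℝ) (A B : Mat3) : Matrix (Fin 6) (Fin 6) ℂ :=
  Matrix.reindex finSumFinEquiv finSumFinEquiv
    (Matrix.fromBlocks (φ - ((ρ : ℂ)/3) • 1) A B (-φᴴ + ((ρ : ℂ)/3) • 1))

lemma lo0 : lo 0 = 0 := rfl
lemma lo1 : lo 1 = 1 := rfl
lemma lo2 : lo 2 = 2 := rfl
lemma lo3 : lo 3 = 0 := rfl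
lemma lo4 : lo 4 = 1 := rfl
lemma lo5 : lo 5 = 2 := rfl

set_option maxHeartbeats 0 in
/-- the null translation Θ(0,0,A,0), with A Hermitian, acts on
P(X,Y,p,q) (X, Y Hermitian, p, q real) by Θ·P(X,Y,p,q) = P(qA, 2·A*X, tr(A∘Y), 0). -/
theorem stmt5 (A : Mat3) (hA : Aᴴ = A) (X Y : Mat3) (hX : Xᴴ = X) (hY : Yᴴ = Y)
    (p q : ℝ) :
    act (ThetaM 0 0 A 0) (PT X Y (p : ℂ) (q : ℂ))
      = PT ((q : ℂ) • A) ((2 : ℂ) • freud A X) ((jord A Y).trace) 0 := by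
  have hT : ∀ i j : Fin 6, ThetaM 0 0 A 0 i j
      = if i.val < 3 ∧ 3 ≤ j.val then A (lo i) (lo j) else 0 := by
    intro i j
    fin_cases i <;> fin_cases j <;>
      simp (config := { decide := true }) [ThetaM, lo, Matrix.fromBlocks,
        finSumFinEquiv, Fin.addCases, Fin.castLT, Fin.subNat] <;> rfl
  funext a b c
  fin_cases a <;> fin_cases b <;> fin_cases c <;>
    simp (config := { decide := true }) [act, hT, PT, cubie, freud, jord,
      lo0, lo1, lo2, lo3, lo4, lo5, eps, sgnZ,
      Fin.sum_univ_six, Fin.sum_univ_three, Matrix.trace, Matrix.diag,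
      Matrix.mul_apply, Matrix.one_apply, Matrix.smul_apply,
      Matrix.add_apply, Matrix.sub_apply] <;>
    ring
end

section
/- Let φ be a traceless 3×3 complex matrix, let Θ = Θ(φ,0,0,0) (the 6×6 block-diagonal matrix diag(φ, −φ†)), let X, Y be Hermitian 3×3 complex matrices, and let p, q ∈ ℝ. Then the symplectic action of Θ on P(X,Y,p,q) gives Θ·P(X,Y,p,q) = P(φX + Xφ†, −φ†Y − Yφ, 0, 0). (Action of the e₆ subalgebra, complex case.) -/
open Matrix BigOperators

lemma theta_eq (φ : Mat3) : ThetaM φ 0 0 0 =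
    !![φ 0 0, φ 0 1, φ 0 2, 0, 0, 0;
       φ 1 0, φ 1 1, φ 1 2, 0, 0, 0;
       φ 2 0, φ 2 1, φ 2 2, 0, 0, 0;
       0, 0, 0, -(starRingEnd ℂ) (φ 0 0), -(starRingEnd ℂ) (φ 1 0), -(starRingEnd ℂ) (φ 2 0);
       0, 0, 0, -(starRingEnd ℂ) (φ 0 1), -(starRingEnd ℂ) (φ 1 1), -(starRingEnd ℂ) (φ 2 1);
       0, 0, 0, -(starRingEnd ℂ) (φ 0 2), -(starRingEnd ℂ) (φ 1 2), -(starRingEnd ℂ) (φ 2 2)] := by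
  funext i j
  fin_cases i <;> fin_cases j <;>
    simp [ThetaM, Matrix.fromBlocks,
      show finSumFinEquiv.symm (0:Fin 6) = (Sum.inl 0 : Fin 3 ⊕ Fin 3) from rfl,
      show finSumFinEquiv.symm (1:Fin 6) = (Sum.inl 1 : Fin 3 ⊕ Fin 3) from rfl,
      show finSumFinEquiv.symm (2:Fin 6) = (Sum.inl 2 : Fin 3 ⊕ Fin 3) from rfl,
      show finSumFinEquiv.symm (3:Fin 6) = (Sum.inr 0 : Fin 3 ⊕ Fin 3) from rfl,
      show finSumFinEquiv.symm (4:Fin 6) = (Sum.inr 1 : Fin 3 ⊕ Fin 3) from rfl,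
      show finSumFinEquiv.symm (5:Fin 6) = (Sum.inr 2 : Fin 3 ⊕ Fin 3) from rfl] <;> rfl

lemma v0 : ((0:Fin 6):ℕ) = 0 := rfl
lemma v1 : ((1:Fin 6):ℕ) = 1 := rfl
lemma v2 : ((2:Fin 6):ℕ) = 2 := rfl
lemma v3 : ((3:Fin 6):ℕ) = 3 := rfl
lemma v4 : ((4:Fin 6):ℕ) = 4 := rfl
lemma v5 : ((5:Fin 6):ℕ) = 5 := rfl
lemma t00 (φ : Mat3) : ThetaM φ 0 0 0 0 0 = φ 0 0 := by rw [theta_eq]; rfl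
lemma t01 (φ : Mat3) : ThetaM φ 0 0 0 0 1 = φ 0 1 := by rw [theta_eq]; rfl
lemma t02 (φ : Mat3) : ThetaM φ 0 0 0 0 2 = φ 0 2 := by rw [theta_eq]; rfl
lemma t03 (φ : Mat3) : ThetaM φ 0 0 0 0 3 = 0 := by rw [theta_eq]; rfl
lemma t04 (φ : Mat3) : ThetaM φ 0 0 0 0 4 = 0 := by rw [theta_eq]; rfl
lemma t05 (φ : Mat3) : ThetaM φ 0 0 0 0 5 = 0 := by rw [theta_eq]; rfl
lemma t10 (φ : Mat3) : ThetaM φ 0 0 0 1 0 = φ 1 0 := by rw [theta_eq]; rfl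
lemma t11 (φ : Mat3) : ThetaM φ 0 0 0 1 1 = φ 1 1 := by rw [theta_eq]; rfl
lemma t12 (φ : Mat3) : ThetaM φ 0 0 0 1 2 = φ 1 2 := by rw [theta_eq]; rfl
lemma t13 (φ : Mat3) : ThetaM φ 0 0 0 1 3 = 0 := by rw [theta_eq]; rfl
lemma t14 (φ : Mat3) : ThetaM φ 0 0 0 1 4 = 0 := by rw [theta_eq]; rfl
lemma t15 (φ : Mat3) : ThetaM φ 0 0 0 1 5 = 0 := by rw [theta_eq]; rfl
lemma t20 (φ : Mat3) : ThetaM φ 0 0 0 2 0 = φ 2 0 := by rw [theta_eq]; rfl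
lemma t21 (φ : Mat3) : ThetaM φ 0 0 0 2 1 = φ 2 1 := by rw [theta_eq]; rfl
lemma t22 (φ : Mat3) : ThetaM φ 0 0 0 2 2 = φ 2 2 := by rw [theta_eq]; rfl
lemma t23 (φ : Mat3) : ThetaM φ 0 0 0 2 3 = 0 := by rw [theta_eq]; rfl
lemma t24 (φ : Mat3) : ThetaM φ 0 0 0 2 4 = 0 := by rw [theta_eq]; rfl
lemma t25 (φ : Mat3) : ThetaM φ 0 0 0 2 5 = 0 := by rw [theta_eq]; rfl
lemma t30 (φ : Mat3) : ThetaM φ 0 0 0 3 0 = 0 := by rw [theta_eq]; rfl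
lemma t31 (φ : Mat3) : ThetaM φ 0 0 0 3 1 = 0 := by rw [theta_eq]; rfl
lemma t32 (φ : Mat3) : ThetaM φ 0 0 0 3 2 = 0 := by rw [theta_eq]; rfl
lemma t33 (φ : Mat3) : ThetaM φ 0 0 0 3 3 = -(starRingEnd ℂ) (φ 0 0) := by rw [theta_eq]; rfl
lemma t34 (φ : Mat3) : ThetaM φ 0 0 0 3 4 = -(starRingEnd ℂ) (φ 1 0) := by rw [theta_eq]; rfl
lemma t35 (φ : Mat3) : ThetaM φ 0 0 0 3 5 = -(starRingEnd ℂ) (φ 2 0) := by rw [theta_eq]; rfl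
lemma t40 (φ : Mat3) : ThetaM φ 0 0 0 4 0 = 0 := by rw [theta_eq]; rfl
lemma t41 (φ : Mat3) : ThetaM φ 0 0 0 4 1 = 0 := by rw [theta_eq]; rfl
lemma t42 (φ : Mat3) : ThetaM φ 0 0 0 4 2 = 0 := by rw [theta_eq]; rfl
lemma t43 (φ : Mat3) : ThetaM φ 0 0 0 4 3 = -(starRingEnd ℂ) (φ 0 1) := by rw [theta_eq]; rfl
lemma t44 (φ : Mat3) : ThetaM φ 0 0 0 4 4 = -(starRingEnd ℂ) (φ 1 1) := by rw [theta_eq]; rfl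
lemma t45 (φ : Mat3) : ThetaM φ 0 0 0 4 5 = -(starRingEnd ℂ) (φ 2 1) := by rw [theta_eq]; rfl
lemma t50 (φ : Mat3) : ThetaM φ 0 0 0 5 0 = 0 := by rw [theta_eq]; rfl
lemma t51 (φ : Mat3) : ThetaM φ 0 0 0 5 1 = 0 := by rw [theta_eq]; rfl
lemma t52 (φ : Mat3) : ThetaM φ 0 0 0 5 2 = 0 := by rw [theta_eq]; rfl
lemma t53 (φ : Mat3) : ThetaM φ 0 0 0 5 3 = -(starRingEnd ℂ) (φ 0 2) := by rw [theta_eq]; rfl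
lemma t54 (φ : Mat3) : ThetaM φ 0 0 0 5 4 = -(starRingEnd ℂ) (φ 1 2) := by rw [theta_eq]; rfl
lemma t55 (φ : Mat3) : ThetaM φ 0 0 0 5 5 = -(starRingEnd ℂ) (φ 2 2) := by rw [theta_eq]; rfl
lemma mk0 : (⟨0, by omega⟩ : Fin 6) = 0 := rfl
lemma mk1 : (⟨1, by omega⟩ : Fin 6) = 1 := rfl
lemma mk2 : (⟨2, by omega⟩ : Fin 6) = 2 := rfl
lemma mk3 : (⟨3, by omega⟩ : Fin 6) = 3 := rfl
lemma mk4 : (⟨4, by omega⟩ : Fin 6) = 4 := rfl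
lemma mk5 : (⟨5, by omega⟩ : Fin 6) = 5 := rfl

set_option maxHeartbeats 0 in
/-- for φ traceless, Θ(φ,0,0,0) acts on P(X,Y,p,q)
(X, Y Hermitian, p, q real) by Θ·P(X,Y,p,q) = P(φX + Xφ†, −φ†Y − Yφ, 0, 0). -/
theorem stmt7 (φ : Mat3) (hφ : φ.trace = 0) (X Y : Mat3) (hX : Xᴴ = X) (hY : Yᴴ = Y)
    (p q : ℝ) :
    act (ThetaM φ 0 0 0) (PT X Y (p : ℂ) (q : ℂ))
      = PT (φ * X + X * φᴴ) (-(φᴴ * Y) - Y * φ) 0 0 := by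
  have h22 : φ 2 2 = -φ 0 0 - φ 1 1 := by
    simp [Matrix.trace, Fin.sum_univ_three] at hφ; linear_combination hφ
  have h22s : (starRingEnd ℂ) (φ 2 2) = -(starRingEnd ℂ) (φ 0 0) - (starRingEnd ℂ) (φ 1 1) := by
    rw [h22]; simp
  funext a b c
  fin_cases a <;> fin_cases b <;> fin_cases c <;>
  · simp only [mk0, mk1, mk2, mk3, mk4, mk5, act, Fin.sum_univ_six, t00, t01, t02, t03, t04, t05, t10, t11, t12, t13, t14, t15, t20, t21, t22, t23, t24, t25, t30, t31, t32, t33, t34, t35, t40, t41, t42, t43, t44, t45, t50, t51, t52, t53, t54, t55, zero_mul, mul_zero, add_zero, zero_add]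
    simp [PT, cubie, eps, sgnZ, Fin.sum_univ_three,
      Matrix.mul_apply, Matrix.conjTranspose_apply, h22, h22s,
      lo0, lo1, lo2, lo3, lo4, lo5, v0, v1, v2, v3, v4, v5]
    try ring
end

section
/- For all 3×3 complex matrices A, B, X, the identity −(A∘B)*X = (B − tr(B)·I)∘(A*X) + A*(B∘X) holds, where ∘ is the Jordan product and * is the Freudenthal product. -/
open Matrix BigOperators

private lemma ext3 (M N : Mat3)
    (h00 : M 0 0 = N 0 0) (h01 : M 0 1 = N 0 1) (h02 : M 0 2 = N 0 2)
    (h10 : M 1 0 = N 1 0) (h11 : M 1 1 = N 1 1) (h12 : M 1 2 = N 1 2)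
    (h20 : M 2 0 = N 2 0) (h21 : M 2 1 = N 2 1) (h22 : M 2 2 = N 2 2) : M = N := by
  ext p q
  fin_cases p <;> fin_cases q <;> assumption

set_option maxHeartbeats 1000000 in
/-- −(A∘B)*X = (B − tr(B)·I)∘(A*X) + A*(B∘X). -/
theorem stmt9 (A B X : Mat3) :
    -(freud (jord A B) X)
      = jord (B - B.trace • (1 : Mat3)) (freud A X) + freud A (jord B X) := by
  rw [Matrix.eta_fin_three A, Matrix.eta_fin_three B, Matrix.eta_fin_three X]
  refine ext3 _ _ ?_ ?_ ?_ ?_ ?_ ?_ ?_ ?_ ?_ <;>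
  · simp only [jord, freud, Matrix.one_fin_three, Matrix.trace_fin_three,
      Matrix.neg_apply, Matrix.add_apply, Matrix.sub_apply, Matrix.smul_apply,
      Matrix.mul_apply, Fin.sum_univ_three, Matrix.of_apply,
      Matrix.cons_val', Matrix.cons_val_zero, Matrix.cons_val_one, Matrix.head_cons,
      Matrix.empty_val', Matrix.cons_val_fin_one, Matrix.head_fin_const,
      Matrix.cons_val_two, Matrix.tail_cons, smul_eq_mul]
    ring
end

section
/- The real Lie algebra so(3,2) = {M ∈ M₅(ℝ) : Mᵀη + ηM = 0}, where η = diag(1,1,1,−1,−1), is isomorphic as a Lie algebra over ℝ to the real symplectic Lie algebra sp(4,ℝ) = {M ∈ M₄(ℝ) : MᵀΩ + ΩM = 0}, where Ω = [[0, I₂],[−I₂, 0]] in 2×2 block form. -/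
open Matrix BigOperators

/-- η = diag(1,1,1,−1,−1), the symmetric bilinear form of signature (3,2). -/
def eta5 : Matrix (Fin 5) (Fin 5) ℝ := Matrix.diagonal ![1, 1, 1, -1, -1]

/-- Ω = [[0, I₂],[−I₂, 0]], the standard 4×4 symplectic form. -/
def Omega4 : Matrix (Fin 4) (Fin 4) ℝ :=
  Matrix.reindex (finSumFinEquiv : Fin 2 ⊕ Fin 2 ≃ Fin 4)
    (finSumFinEquiv : Fin 2 ⊕ Fin 2 ≃ Fin 4)
    (Matrix.fromBlocks (0 : Matrix (Fin 2) (Fin 2) ℝ) 1 (-1) 0)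

/- ### Auxiliary definitions -/

/-- Generic element of sp(4,ℝ). -/
def sp4m (a00 a01 a10 a11 b00 b01 b11 c00 c01 c11 : ℝ) : Matrix (Fin 4) (Fin 4) ℝ :=
  !![a00, a01, b00, b01; a10, a11, b01, b11; c00, c01, -a00, -a10; c01, c11, -a01, -a11]

/-- Generic element of so(3,2). -/
def so32m (p q r s t u v w x y : ℝ) : Matrix (Fin 5) (Fin 5) ℝ :=
  !![0, p, q, r, s; -p, 0, t, u, v; -q, -t, 0, w, x; r, u, w, 0, y; s, v, x, -y, 0]

/-- The linear map so(3,2) → sp(4,ℝ) (inverse of the Λ² construction). -/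
noncomputable def gmat (N : Matrix (Fin 5) (Fin 5) ℝ) : Matrix (Fin 4) (Fin 4) ℝ :=
  !![(N 0 3 + N 1 4) / 2, (-(N 1 2) - N 2 4) / 2, (N 0 4 + N 3 4 - N 0 1 - N 1 3) / 2,
       (N 0 2 + N 2 3) / 2;
     (N 1 2 - N 2 4) / 2, (N 0 3 - N 1 4) / 2, (N 0 2 + N 2 3) / 2,
       (N 0 4 + N 3 4 + N 0 1 + N 1 3) / 2;
     (N 0 4 - N 3 4 + N 0 1 - N 1 3) / 2, (N 2 3 - N 0 2) / 2, -((N 0 3 + N 1 4) / 2),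
       -((N 1 2 - N 2 4) / 2);
     (N 2 3 - N 0 2) / 2, (N 0 4 - N 3 4 - N 0 1 + N 1 3) / 2, -((-(N 1 2) - N 2 4) / 2),
       -((N 0 3 - N 1 4) / 2)]

/-- The linear map sp(4,ℝ) → so(3,2) (action on Λ²ℝ⁴ restricted to ω^⊥). -/
noncomputable def fmat (M : Matrix (Fin 4) (Fin 4) ℝ) : Matrix (Fin 5) (Fin 5) ℝ :=
  !![0, (-(M 0 2) + M 1 3 + M 2 0 - M 3 1) / 2, M 0 3 - M 2 1, M 0 0 + M 1 1,
       (M 0 2 + M 1 3 + M 2 0 + M 3 1) / 2;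
     (M 0 2 - M 1 3 - M 2 0 + M 3 1) / 2, 0, M 1 0 - M 0 1,
       (-(M 0 2) + M 1 3 - M 2 0 + M 3 1) / 2, M 0 0 - M 1 1;
     M 2 1 - M 0 3, M 0 1 - M 1 0, 0, M 0 3 + M 2 1, -(M 0 1) - M 1 0;
     M 0 0 + M 1 1, (-(M 0 2) + M 1 3 - M 2 0 + M 3 1) / 2, M 0 3 + M 2 1, 0,
       (M 0 2 + M 1 3 - M 2 0 - M 3 1) / 2;
     (M 0 2 + M 1 3 + M 2 0 + M 3 1) / 2, M 0 0 - M 1 1, -(M 0 1) - M 1 0,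
       (-(M 0 2) - M 1 3 + M 2 0 + M 3 1) / 2, 0]

lemma vc3 {α : Type*} {m : ℕ} (a : α) (u : Fin (m+3) → α) : vecCons a u 3 = u 2 := rfl
lemma vc4 {α : Type*} {m : ℕ} (a : α) (u : Fin (m+4) → α) : vecCons a u 4 = u 3 := rfl

lemma Omega4_eq : Omega4 = !![0, 0, 1, 0; 0, 0, 0, 1; -1, 0, 0, 0; 0, -1, 0, 0] := by
  ext i j
  fin_cases i <;> fin_cases j <;>
    norm_num [Omega4, Matrix.fromBlocks, finSumFinEquiv, Fin.addCases, Matrix.one_apply,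
      Fin.ext_iff, Fin.castLT, Fin.subNat, Sum.elim, Matrix.reindex_apply,
      Matrix.submatrix_apply, Matrix.vecHead, Matrix.vecTail]

lemma eta5_eq : eta5 = !![1, 0, 0, 0, 0; 0, 1, 0, 0, 0; 0, 0, 1, 0, 0;
    0, 0, 0, -1, 0; 0, 0, 0, 0, -1] := by
  ext i j
  fin_cases i <;> fin_cases j <;>
    norm_num [eta5, Matrix.diagonal, Fin.ext_iff, Matrix.vecHead, Matrix.vecTail]

set_option maxHeartbeats 2000000 in
lemma mem_sp4_iff (M : Matrix (Fin 4) (Fin 4) ℝ) :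
    M ∈ skewAdjointMatricesLieSubalgebra Omega4 ↔
      ∃ a00 a01 a10 a11 b00 b01 b11 c00 c01 c11 : ℝ,
        M = sp4m a00 a01 a10 a11 b00 b01 b11 c00 c01 c11 := by
  rw [mem_skewAdjointMatricesLieSubalgebra, mem_skewAdjointMatricesSubmodule]
  unfold Matrix.IsSkewAdjoint Matrix.IsAdjointPair
  rw [Omega4_eq]
  constructor
  · intro h
    have h1 := congrFun (congrFun h 0) 0; have h2 := congrFun (congrFun h 0) 1
    have h3 := congrFun (congrFun h 0) 2; have h4 := congrFun (congrFun h 0) 3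
    have h5 := congrFun (congrFun h 1) 0; have h6 := congrFun (congrFun h 1) 1
    have h7 := congrFun (congrFun h 1) 2; have h8 := congrFun (congrFun h 1) 3
    have h9 := congrFun (congrFun h 2) 0; have h10 := congrFun (congrFun h 2) 1
    have h11 := congrFun (congrFun h 2) 2; have h12 := congrFun (congrFun h 2) 3
    have h13 := congrFun (congrFun h 3) 0; have h14 := congrFun (congrFun h 3) 1
    have h15 := congrFun (congrFun h 3) 2; have h16 := congrFun (congrFun h 3) 3
    norm_num [Matrix.mul_apply, Fin.sum_univ_four, Matrix.transpose_apply,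
      Matrix.neg_apply, Matrix.vecHead,
      Matrix.vecTail, Matrix.cons_val_two, vc3, vc4] at h1 h2 h3 h4 h5 h6 h7 h8 h9 h10 h11 h12 h13 h14 h15 h16
    refine ⟨M 0 0, M 0 1, M 1 0, M 1 1, M 0 2, M 0 3, M 1 3, M 2 0, M 2 1, M 3 1, ?_⟩
    ext i j
    fin_cases i <;> fin_cases j <;> simp [sp4m] <;> linarith
  · rintro ⟨a00, a01, a10, a11, b00, b01, b11, c00, c01, c11, rfl⟩
    ext i j
    fin_cases i <;> fin_cases j <;>
      simp [sp4m, Matrix.mul_apply, Matrix.transpose_apply, Fin.sum_univ_four,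
        Matrix.vecHead, Matrix.vecTail, Matrix.neg_apply] <;> ring

set_option maxHeartbeats 2000000 in
lemma mem_so32_iff (N : Matrix (Fin 5) (Fin 5) ℝ) :
    N ∈ skewAdjointMatricesLieSubalgebra eta5 ↔
      ∃ p q r s t u v w x y : ℝ, N = so32m p q r s t u v w x y := by
  rw [mem_skewAdjointMatricesLieSubalgebra, mem_skewAdjointMatricesSubmodule]
  unfold Matrix.IsSkewAdjoint Matrix.IsAdjointPair
  rw [eta5_eq]
  constructor
  · intro h
    have h1 := congrFun (congrFun h 0) 0; have h2 := congrFun (congrFun h 0) 1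
    have h3 := congrFun (congrFun h 0) 2; have h4 := congrFun (congrFun h 0) 3
    have h5 := congrFun (congrFun h 0) 4; have h6 := congrFun (congrFun h 1) 0
    have h7 := congrFun (congrFun h 1) 1; have h8 := congrFun (congrFun h 1) 2
    have h9 := congrFun (congrFun h 1) 3; have h10 := congrFun (congrFun h 1) 4
    have h11 := congrFun (congrFun h 2) 0; have h12 := congrFun (congrFun h 2) 1
    have h13 := congrFun (congrFun h 2) 2; have h14 := congrFun (congrFun h 2) 3
    have h15 := congrFun (congrFun h 2) 4; have h16 := congrFun (congrFun h 3) 0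
    have h17 := congrFun (congrFun h 3) 1; have h18 := congrFun (congrFun h 3) 2
    have h19 := congrFun (congrFun h 3) 3; have h20 := congrFun (congrFun h 3) 4
    have h21 := congrFun (congrFun h 4) 0; have h22 := congrFun (congrFun h 4) 1
    have h23 := congrFun (congrFun h 4) 2; have h24 := congrFun (congrFun h 4) 3
    have h25 := congrFun (congrFun h 4) 4
    norm_num [Matrix.mul_apply, Fin.sum_univ_five, Matrix.transpose_apply,
      Matrix.neg_apply, Matrix.vecHead, Matrix.vecTail, Matrix.cons_val_two, vc3, vc4] at h1 h2 h3 h4 h5 h6 h7 h8 h9 h10 h11 h12 h13 h14 h15 h16 h17 h18 h19 h20 h21 h22 h23 h24 h25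
    refine ⟨N 0 1, N 0 2, N 0 3, N 0 4, N 1 2, N 1 3, N 1 4, N 2 3, N 2 4, N 3 4, ?_⟩
    ext i j
    fin_cases i <;> fin_cases j <;> simp [so32m] <;> linarith
  · rintro ⟨p, q, r, s, t, u, v, w, x, y, rfl⟩
    ext i j
    fin_cases i <;> fin_cases j <;>
      simp [so32m, Matrix.mul_apply, Matrix.transpose_apply, Fin.sum_univ_five,
        Matrix.vecHead, Matrix.vecTail, Matrix.neg_apply] <;> ring

lemma gmat_add (A B : Matrix (Fin 5) (Fin 5) ℝ) : gmat (A + B) = gmat A + gmat B := by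
  ext i j
  fin_cases i <;> fin_cases j <;>
    simp [gmat, Matrix.add_apply, Matrix.vecHead, Matrix.vecTail] <;> ring

lemma gmat_smul (c : ℝ) (A : Matrix (Fin 5) (Fin 5) ℝ) : gmat (c • A) = c • gmat A := by
  ext i j
  fin_cases i <;> fin_cases j <;>
    simp [gmat, Matrix.smul_apply, Matrix.vecHead, Matrix.vecTail, smul_eq_mul] <;> ring

set_option maxHeartbeats 2000000 in
lemma gmat_so32m (p q r s t u v w x y : ℝ) :
    gmat (so32m p q r s t u v w x y) =
      sp4m ((r + v) / 2) ((-t - x) / 2) ((t - x) / 2) ((r - v) / 2) ((s + y - p - u) / 2)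
        ((q + w) / 2) ((s + y + p + u) / 2) ((s - y + p - u) / 2) ((w - q) / 2)
        ((s - y - p + u) / 2) := by
  ext i j
  fin_cases i <;> fin_cases j <;>
    simp [gmat, so32m, sp4m, Matrix.vecHead, Matrix.vecTail] <;> ring

set_option maxHeartbeats 2000000 in
lemma fmat_sp4m (a00 a01 a10 a11 b00 b01 b11 c00 c01 c11 : ℝ) :
    fmat (sp4m a00 a01 a10 a11 b00 b01 b11 c00 c01 c11) =
      so32m ((-b00 + b11 + c00 - c11) / 2) (b01 - c01) (a00 + a11) ((b00 + b11 + c00 + c11) / 2)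
        (a10 - a01) ((-b00 + b11 - c00 + c11) / 2) (a00 - a11) (b01 + c01) (-a01 - a10)
        ((b00 + b11 - c00 - c11) / 2) := by
  ext i j
  fin_cases i <;> fin_cases j <;>
    simp [fmat, sp4m, so32m, Matrix.vecHead, Matrix.vecTail] <;> ring

lemma matrix5_ext' {A B : Matrix (Fin 5) (Fin 5) ℝ}
    (h00 : A 0 0 = B 0 0) (h01 : A 0 1 = B 0 1) (h02 : A 0 2 = B 0 2)
    (h03 : A 0 3 = B 0 3) (h04 : A 0 4 = B 0 4) (h10 : A 1 0 = B 1 0)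
    (h11 : A 1 1 = B 1 1) (h12 : A 1 2 = B 1 2) (h13 : A 1 3 = B 1 3)
    (h14 : A 1 4 = B 1 4) (h20 : A 2 0 = B 2 0) (h21 : A 2 1 = B 2 1)
    (h22 : A 2 2 = B 2 2) (h23 : A 2 3 = B 2 3) (h24 : A 2 4 = B 2 4)
    (h30 : A 3 0 = B 3 0) (h31 : A 3 1 = B 3 1) (h32 : A 3 2 = B 3 2)
    (h33 : A 3 3 = B 3 3) (h34 : A 3 4 = B 3 4) (h40 : A 4 0 = B 4 0)
    (h41 : A 4 1 = B 4 1) (h42 : A 4 2 = B 4 2) (h43 : A 4 3 = B 4 3)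
    (h44 : A 4 4 = B 4 4)
    : A = B := by
  ext i j; fin_cases i <;> fin_cases j <;> assumption

lemma matrix4_ext' {A B : Matrix (Fin 4) (Fin 4) ℝ}
    (h00 : A 0 0 = B 0 0) (h01 : A 0 1 = B 0 1) (h02 : A 0 2 = B 0 2)
    (h03 : A 0 3 = B 0 3) (h10 : A 1 0 = B 1 0) (h11 : A 1 1 = B 1 1)
    (h12 : A 1 2 = B 1 2) (h13 : A 1 3 = B 1 3) (h20 : A 2 0 = B 2 0)
    (h21 : A 2 1 = B 2 1) (h22 : A 2 2 = B 2 2) (h23 : A 2 3 = B 2 3)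
    (h30 : A 3 0 = B 3 0) (h31 : A 3 1 = B 3 1) (h32 : A 3 2 = B 3 2)
    (h33 : A 3 3 = B 3 3)
    : A = B := by
  ext i j; fin_cases i <;> fin_cases j <;> assumption

lemma so32m_app_00 (p q r s t u v w x y : ℝ) : so32m p q r s t u v w x y 0 0 = 0 := rfl
lemma so32m_app_01 (p q r s t u v w x y : ℝ) : so32m p q r s t u v w x y 0 1 = p := rfl
lemma so32m_app_02 (p q r s t u v w x y : ℝ) : so32m p q r s t u v w x y 0 2 = q := rfl
lemma so32m_app_03 (p q r s t u v w x y : ℝ) : so32m p q r s t u v w x y 0 3 = r := rfl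
lemma so32m_app_04 (p q r s t u v w x y : ℝ) : so32m p q r s t u v w x y 0 4 = s := rfl
lemma so32m_app_10 (p q r s t u v w x y : ℝ) : so32m p q r s t u v w x y 1 0 = -p := rfl
lemma so32m_app_11 (p q r s t u v w x y : ℝ) : so32m p q r s t u v w x y 1 1 = 0 := rfl
lemma so32m_app_12 (p q r s t u v w x y : ℝ) : so32m p q r s t u v w x y 1 2 = t := rfl
lemma so32m_app_13 (p q r s t u v w x y : ℝ) : so32m p q r s t u v w x y 1 3 = u := rfl
lemma so32m_app_14 (p q r s t u v w x y : ℝ) : so32m p q r s t u v w x y 1 4 = v := rfl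
lemma so32m_app_20 (p q r s t u v w x y : ℝ) : so32m p q r s t u v w x y 2 0 = -q := rfl
lemma so32m_app_21 (p q r s t u v w x y : ℝ) : so32m p q r s t u v w x y 2 1 = -t := rfl
lemma so32m_app_22 (p q r s t u v w x y : ℝ) : so32m p q r s t u v w x y 2 2 = 0 := rfl
lemma so32m_app_23 (p q r s t u v w x y : ℝ) : so32m p q r s t u v w x y 2 3 = w := rfl
lemma so32m_app_24 (p q r s t u v w x y : ℝ) : so32m p q r s t u v w x y 2 4 = x := rfl
lemma so32m_app_30 (p q r s t u v w x y : ℝ) : so32m p q r s t u v w x y 3 0 = r := rfl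
lemma so32m_app_31 (p q r s t u v w x y : ℝ) : so32m p q r s t u v w x y 3 1 = u := rfl
lemma so32m_app_32 (p q r s t u v w x y : ℝ) : so32m p q r s t u v w x y 3 2 = w := rfl
lemma so32m_app_33 (p q r s t u v w x y : ℝ) : so32m p q r s t u v w x y 3 3 = 0 := rfl
lemma so32m_app_34 (p q r s t u v w x y : ℝ) : so32m p q r s t u v w x y 3 4 = y := rfl
lemma so32m_app_40 (p q r s t u v w x y : ℝ) : so32m p q r s t u v w x y 4 0 = s := rfl
lemma so32m_app_41 (p q r s t u v w x y : ℝ) : so32m p q r s t u v w x y 4 1 = v := rfl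
lemma so32m_app_42 (p q r s t u v w x y : ℝ) : so32m p q r s t u v w x y 4 2 = x := rfl
lemma so32m_app_43 (p q r s t u v w x y : ℝ) : so32m p q r s t u v w x y 4 3 = -y := rfl
lemma so32m_app_44 (p q r s t u v w x y : ℝ) : so32m p q r s t u v w x y 4 4 = 0 := rfl

lemma sp4m_app_00 (a00 a01 a10 a11 b00 b01 b11 c00 c01 c11 : ℝ) : sp4m a00 a01 a10 a11 b00 b01 b11 c00 c01 c11 0 0 = a00 := rfl
lemma sp4m_app_01 (a00 a01 a10 a11 b00 b01 b11 c00 c01 c11 : ℝ) : sp4m a00 a01 a10 a11 b00 b01 b11 c00 c01 c11 0 1 = a01 := rfl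
lemma sp4m_app_02 (a00 a01 a10 a11 b00 b01 b11 c00 c01 c11 : ℝ) : sp4m a00 a01 a10 a11 b00 b01 b11 c00 c01 c11 0 2 = b00 := rfl
lemma sp4m_app_03 (a00 a01 a10 a11 b00 b01 b11 c00 c01 c11 : ℝ) : sp4m a00 a01 a10 a11 b00 b01 b11 c00 c01 c11 0 3 = b01 := rfl
lemma sp4m_app_10 (a00 a01 a10 a11 b00 b01 b11 c00 c01 c11 : ℝ) : sp4m a00 a01 a10 a11 b00 b01 b11 c00 c01 c11 1 0 = a10 := rfl
lemma sp4m_app_11 (a00 a01 a10 a11 b00 b01 b11 c00 c01 c11 : ℝ) : sp4m a00 a01 a10 a11 b00 b01 b11 c00 c01 c11 1 1 = a11 := rfl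
lemma sp4m_app_12 (a00 a01 a10 a11 b00 b01 b11 c00 c01 c11 : ℝ) : sp4m a00 a01 a10 a11 b00 b01 b11 c00 c01 c11 1 2 = b01 := rfl
lemma sp4m_app_13 (a00 a01 a10 a11 b00 b01 b11 c00 c01 c11 : ℝ) : sp4m a00 a01 a10 a11 b00 b01 b11 c00 c01 c11 1 3 = b11 := rfl
lemma sp4m_app_20 (a00 a01 a10 a11 b00 b01 b11 c00 c01 c11 : ℝ) : sp4m a00 a01 a10 a11 b00 b01 b11 c00 c01 c11 2 0 = c00 := rfl
lemma sp4m_app_21 (a00 a01 a10 a11 b00 b01 b11 c00 c01 c11 : ℝ) : sp4m a00 a01 a10 a11 b00 b01 b11 c00 c01 c11 2 1 = c01 := rfl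
lemma sp4m_app_22 (a00 a01 a10 a11 b00 b01 b11 c00 c01 c11 : ℝ) : sp4m a00 a01 a10 a11 b00 b01 b11 c00 c01 c11 2 2 = -a00 := rfl
lemma sp4m_app_23 (a00 a01 a10 a11 b00 b01 b11 c00 c01 c11 : ℝ) : sp4m a00 a01 a10 a11 b00 b01 b11 c00 c01 c11 2 3 = -a10 := rfl
lemma sp4m_app_30 (a00 a01 a10 a11 b00 b01 b11 c00 c01 c11 : ℝ) : sp4m a00 a01 a10 a11 b00 b01 b11 c00 c01 c11 3 0 = c01 := rfl
lemma sp4m_app_31 (a00 a01 a10 a11 b00 b01 b11 c00 c01 c11 : ℝ) : sp4m a00 a01 a10 a11 b00 b01 b11 c00 c01 c11 3 1 = c11 := rfl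
lemma sp4m_app_32 (a00 a01 a10 a11 b00 b01 b11 c00 c01 c11 : ℝ) : sp4m a00 a01 a10 a11 b00 b01 b11 c00 c01 c11 3 2 = -a01 := rfl
lemma sp4m_app_33 (a00 a01 a10 a11 b00 b01 b11 c00 c01 c11 : ℝ) : sp4m a00 a01 a10 a11 b00 b01 b11 c00 c01 c11 3 3 = -a11 := rfl


lemma so32m_congr {p q r s t u v w x y p1 q1 r1 s1 t1 u1 v1 w1 x1 y1 : ℝ}
    (hp : p = p1) (hq : q = q1) (hr : r = r1) (hs : s = s1) (ht : t = t1) (hu : u = u1)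
    (hv : v = v1) (hw : w = w1) (hx : x = x1) (hy : y = y1) :
    so32m p q r s t u v w x y = so32m p1 q1 r1 s1 t1 u1 v1 w1 x1 y1 := by
  rw [hp, hq, hr, hs, ht, hu, hv, hw, hx, hy]

lemma sp4m_congr {a00 a01 a10 a11 b00 b01 b11 c00 c01 c11
    d00 d01 d10 d11 e00 e01 e11 f00 f01 f11 : ℝ}
    (h1 : a00 = d00) (h2 : a01 = d01) (h3 : a10 = d10) (h4 : a11 = d11) (h5 : b00 = e00)
    (h6 : b01 = e01) (h7 : b11 = e11) (h8 : c00 = f00) (h9 : c01 = f01) (h10 : c11 = f11) :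
    sp4m a00 a01 a10 a11 b00 b01 b11 c00 c01 c11 = sp4m d00 d01 d10 d11 e00 e01 e11 f00 f01 f11 := by
  rw [h1, h2, h3, h4, h5, h6, h7, h8, h9, h10]

set_option maxHeartbeats 2000000 in
lemma so32m_bracket (p q r s t u v w x y p' q' r' s' t' u' v' w' x' y' : ℝ) :
    ⁅so32m p q r s t u v w x y, so32m p' q' r' s' t' u' v' w' x' y'⁆ =
      so32m ( (q) * (-(t')) - (q') * (-(t)) + (r) * (u') - (r') * (u) + (s) * (v') - (s') * (v))
        ( (p) * (t') - (p') * (t) + (r) * (w') - (r') * (w) + (s) * (x') - (s') * (x))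
        ( (p) * (u') - (p') * (u) + (q) * (w') - (q') * (w) + (s) * (-(y')) - (s') * (-(y)))
        ( (p) * (v') - (p') * (v) + (q) * (x') - (q') * (x) + (r) * (y') - (r') * (y))
        ( (-(p)) * (q') - (-(p')) * (q) + (u) * (w') - (u') * (w) + (v) * (x') - (v') * (x))
        ( (-(p)) * (r') - (-(p')) * (r) + (t) * (w') - (t') * (w) + (v) * (-(y')) - (v') * (-(y)))
        ( (-(p)) * (s') - (-(p')) * (s) + (t) * (x') - (t') * (x) + (u) * (y') - (u') * (y))
        ( (-(q)) * (r') - (-(q')) * (r) + (-(t)) * (u') - (-(t')) * (u) + (x) * (-(y')) - (x') * (-(y)))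
        ( (-(q)) * (s') - (-(q')) * (s) + (-(t)) * (v') - (-(t')) * (v) + (w) * (y') - (w') * (y))
        ( (r) * (s') - (r') * (s) + (u) * (v') - (u') * (v) + (w) * (x') - (w') * (x)) := by
  rw [Ring.lie_def]
  refine matrix5_ext' ?_ ?_ ?_ ?_ ?_ ?_ ?_ ?_ ?_ ?_ ?_ ?_ ?_ ?_ ?_ ?_ ?_ ?_ ?_ ?_ ?_ ?_ ?_ ?_ ?_ <;>
    · simp only [Matrix.sub_apply, Matrix.mul_apply, Fin.sum_univ_five,
        so32m_app_00, so32m_app_01, so32m_app_02, so32m_app_03, so32m_app_04, so32m_app_10, so32m_app_11, so32m_app_12, so32m_app_13, so32m_app_14, so32m_app_20, so32m_app_21, so32m_app_22, so32m_app_23, so32m_app_24, so32m_app_30, so32m_app_31, so32m_app_32, so32m_app_33, so32m_app_34, so32m_app_40, so32m_app_41, so32m_app_42, so32m_app_43, so32m_app_44]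
      ring

set_option maxHeartbeats 2000000 in
lemma sp4m_bracket (a00 a01 a10 a11 b00 b01 b11 c00 c01 c11
    a00' a01' a10' a11' b00' b01' b11' c00' c01' c11' : ℝ) :
    ⁅sp4m a00 a01 a10 a11 b00 b01 b11 c00 c01 c11,
     sp4m a00' a01' a10' a11' b00' b01' b11' c00' c01' c11'⁆ =
      sp4m ( (a00) * (a00') - (a00') * (a00) + (a01) * (a10') - (a01') * (a10) + (b00) * (c00') - (b00') * (c00) + (b01) * (c01') - (b01') * (c01))
        ( (a00) * (a01') - (a00') * (a01) + (a01) * (a11') - (a01') * (a11) + (b00) * (c01') - (b00') * (c01) + (b01) * (c11') - (b01') * (c11))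
        ( (a10) * (a00') - (a10') * (a00) + (a11) * (a10') - (a11') * (a10) + (b01) * (c00') - (b01') * (c00) + (b11) * (c01') - (b11') * (c01))
        ( (a10) * (a01') - (a10') * (a01) + (a11) * (a11') - (a11') * (a11) + (b01) * (c01') - (b01') * (c01) + (b11) * (c11') - (b11') * (c11))
        ( (a00) * (b00') - (a00') * (b00) + (a01) * (b01') - (a01') * (b01) + (b00) * (-(a00')) - (b00') * (-(a00)) + (b01) * (-(a01')) - (b01') * (-(a01)))
        ( (a00) * (b01') - (a00') * (b01) + (a01) * (b11') - (a01') * (b11) + (b00) * (-(a10')) - (b00') * (-(a10)) + (b01) * (-(a11')) - (b01') * (-(a11)))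
        ( (a10) * (b01') - (a10') * (b01) + (a11) * (b11') - (a11') * (b11) + (b01) * (-(a10')) - (b01') * (-(a10)) + (b11) * (-(a11')) - (b11') * (-(a11)))
        ( (c00) * (a00') - (c00') * (a00) + (c01) * (a10') - (c01') * (a10) + (-(a00)) * (c00') - (-(a00')) * (c00) + (-(a10)) * (c01') - (-(a10')) * (c01))
        ( (c00) * (a01') - (c00') * (a01) + (c01) * (a11') - (c01') * (a11) + (-(a00)) * (c01') - (-(a00')) * (c01) + (-(a10)) * (c11') - (-(a10')) * (c11))
        ( (c01) * (a01') - (c01') * (a01) + (c11) * (a11') - (c11') * (a11) + (-(a01)) * (c01') - (-(a01')) * (c01) + (-(a11)) * (c11') - (-(a11')) * (c11)) := by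
  rw [Ring.lie_def]
  refine matrix4_ext' ?_ ?_ ?_ ?_ ?_ ?_ ?_ ?_ ?_ ?_ ?_ ?_ ?_ ?_ ?_ ?_ <;>
    · simp only [Matrix.sub_apply, Matrix.mul_apply, Fin.sum_univ_four,
        sp4m_app_00, sp4m_app_01, sp4m_app_02, sp4m_app_03, sp4m_app_10, sp4m_app_11, sp4m_app_12, sp4m_app_13, sp4m_app_20, sp4m_app_21, sp4m_app_22, sp4m_app_23, sp4m_app_30, sp4m_app_31, sp4m_app_32, sp4m_app_33]
      ring

lemma gmat_bracket (N₁ N₂ : Matrix (Fin 5) (Fin 5) ℝ)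
    (h₁ : N₁ ∈ skewAdjointMatricesLieSubalgebra eta5)
    (h₂ : N₂ ∈ skewAdjointMatricesLieSubalgebra eta5) :
    gmat ⁅N₁, N₂⁆ = ⁅gmat N₁, gmat N₂⁆ := by
  rw [mem_so32_iff] at h₁ h₂
  obtain ⟨p, q, r, s, t, u, v, w, x, y, rfl⟩ := h₁
  obtain ⟨p', q', r', s', t', u', v', w', x', y', rfl⟩ := h₂
  rw [so32m_bracket, gmat_so32m, gmat_so32m, gmat_so32m, sp4m_bracket]
  exact sp4m_congr (by ring) (by ring) (by ring) (by ring) (by ring) (by ring) (by ring) (by ring) (by ring) (by ring)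

lemma fmat_gmat (N : Matrix (Fin 5) (Fin 5) ℝ)
    (h : N ∈ skewAdjointMatricesLieSubalgebra eta5) : fmat (gmat N) = N := by
  rw [mem_so32_iff] at h
  obtain ⟨p, q, r, s, t, u, v, w, x, y, rfl⟩ := h
  rw [gmat_so32m, fmat_sp4m]
  exact so32m_congr (by ring) (by ring) (by ring) (by ring) (by ring) (by ring) (by ring) (by ring) (by ring) (by ring)

lemma gmat_fmat (M : Matrix (Fin 4) (Fin 4) ℝ)
    (h : M ∈ skewAdjointMatricesLieSubalgebra Omega4) : gmat (fmat M) = M := by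
  rw [mem_sp4_iff] at h
  obtain ⟨a00, a01, a10, a11, b00, b01, b11, c00, c01, c11, rfl⟩ := h
  rw [fmat_sp4m, gmat_so32m]
  exact sp4m_congr (by ring) (by ring) (by ring) (by ring) (by ring) (by ring) (by ring) (by ring) (by ring) (by ring)

lemma gmat_mem (N : Matrix (Fin 5) (Fin 5) ℝ)
    (h : N ∈ skewAdjointMatricesLieSubalgebra eta5) :
    gmat N ∈ skewAdjointMatricesLieSubalgebra Omega4 := by
  rw [mem_so32_iff] at h
  obtain ⟨p, q, r, s, t, u, v, w, x, y, rfl⟩ := h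
  rw [gmat_so32m, mem_sp4_iff]
  exact ⟨_, _, _, _, _, _, _, _, _, _, rfl⟩

lemma fmat_mem (M : Matrix (Fin 4) (Fin 4) ℝ)
    (h : M ∈ skewAdjointMatricesLieSubalgebra Omega4) :
    fmat M ∈ skewAdjointMatricesLieSubalgebra eta5 := by
  rw [mem_sp4_iff] at h
  obtain ⟨a00, a01, a10, a11, b00, b01, b11, c00, c01, c11, rfl⟩ := h
  rw [fmat_sp4m, mem_so32_iff]
  exact ⟨_, _, _, _, _, _, _, _, _, _, rfl⟩

/-- The Lie algebra homomorphism so(3,2) → sp(4,ℝ). -/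
noncomputable def gHom : (skewAdjointMatricesLieSubalgebra eta5) →ₗ⁅ℝ⁆
    (skewAdjointMatricesLieSubalgebra Omega4) where
  toFun N := ⟨gmat N.1, gmat_mem N.1 N.2⟩
  map_add' N₁ N₂ := by
    apply Subtype.ext
    simpa using gmat_add N₁.1 N₂.1
  map_smul' c N := by
    apply Subtype.ext
    simpa using gmat_smul c N.1
  map_lie' {N₁ N₂} := by
    apply Subtype.ext
    simpa using gmat_bracket N₁.1 N₂.1 N₁.2 N₂.2

lemma gHom_bijective : Function.Bijective gHom := by
  constructor
  · intro N₁ N₂ h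
    apply Subtype.ext
    have h' : gmat N₁.1 = gmat N₂.1 := congrArg Subtype.val h
    calc N₁.1 = fmat (gmat N₁.1) := (fmat_gmat N₁.1 N₁.2).symm
    _ = fmat (gmat N₂.1) := by rw [h']
    _ = N₂.1 := fmat_gmat N₂.1 N₂.2
  · intro M
    refine ⟨⟨fmat M.1, fmat_mem M.1 M.2⟩, ?_⟩
    apply Subtype.ext
    exact gmat_fmat M.1 M.2

/-- the real Lie algebra so(3,2) = {M ∈ M₅(ℝ) : Mᵀη + ηM = 0} is
isomorphic, as a Lie algebra over ℝ, to sp(4,ℝ) = {M ∈ M₄(ℝ) : MᵀΩ + ΩM = 0}. -/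
theorem stmt12 :
    Nonempty ((skewAdjointMatricesLieSubalgebra eta5) ≃ₗ⁅ℝ⁆
      (skewAdjointMatricesLieSubalgebra Omega4)) := by
  exact ⟨LieEquiv.ofBijective gHom gHom_bijective⟩
end

section
/- The real Lie algebra so(4,2) = {M ∈ M₆(ℝ) : Mᵀη + ηM = 0}, where η = diag(1,1,1,1,−1,−1), is isomorphic as a Lie algebra over ℝ to su(2,2) = {M ∈ M₄(ℂ) : tr(M) = 0 and M†H + HM = 0}, where H = diag(1,1,−1,−1) and † is conjugate transpose, regarded as a real Lie algebra under the matrix commutator. -/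
open Matrix BigOperators

attribute [local instance 100] LieRing.ofAssociativeRing

/-- η = diag(1,1,1,1,−1,−1), the symmetric bilinear form of signature (4,2). -/
def eta6 : Matrix (Fin 6) (Fin 6) ℝ := Matrix.diagonal ![1, 1, 1, 1, -1, -1]

/-- H = diag(1,1,−1,−1), the Hermitian form of signature (2,2) on ℂ⁴. -/
def H4 : Matrix (Fin 4) (Fin 4) ℂ := Matrix.diagonal ![1, 1, -1, -1]

lemma H4_mul_H4 : H4 * H4 = 1 := by
  ext i j
  fin_cases i <;> fin_cases j <;>
    simp [H4, Matrix.mul_apply, Fin.sum_univ_four, Matrix.diagonal, Matrix.one_apply]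

/-- su(2,2): the real Lie algebra of traceless complex 4×4 matrices M with
M†H + HM = 0, where H = diag(1,1,−1,−1). -/
def su22 : LieSubalgebra ℝ (Matrix (Fin 4) (Fin 4) ℂ) where
  carrier := {M | M.trace = 0 ∧ Mᴴ * H4 + H4 * M = 0}
  add_mem' := by
    rintro M N ⟨hM1, hM2⟩ ⟨hN1, hN2⟩
    constructor
    · simp [Matrix.trace_add, hM1, hN1]
    · have : (M + N)ᴴ * H4 + H4 * (M + N)
          = (Mᴴ * H4 + H4 * M) + (Nᴴ * H4 + H4 * N) := by
        rw [Matrix.conjTranspose_add]; noncomm_ring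
      rw [this, hM2, hN2, add_zero]
  zero_mem' := by simp
  smul_mem' := by
    rintro r M ⟨hM1, hM2⟩
    constructor
    · simp [hM1]
    · have h1 : (r • M)ᴴ = r • Mᴴ := by
        simp
      rw [h1, Matrix.smul_mul, Matrix.mul_smul, ← smul_add, hM2, smul_zero]
  lie_mem' := by
    rintro M N ⟨hM1, hM2⟩ ⟨hN1, hN2⟩
    have hM3 : Mᴴ * H4 = -(H4 * M) := eq_neg_of_add_eq_zero_left hM2
    have hN3 : Nᴴ * H4 = -(H4 * N) := eq_neg_of_add_eq_zero_left hN2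
    constructor
    · simp [Ring.lie_def, Matrix.trace_sub, Matrix.trace_mul_comm M N]
    · show (⁅M, N⁆)ᴴ * H4 + H4 * ⁅M, N⁆ = 0
      rw [Ring.lie_def, Matrix.conjTranspose_sub, Matrix.conjTranspose_mul,
        Matrix.conjTranspose_mul, Matrix.sub_mul,
        Matrix.mul_assoc Nᴴ Mᴴ H4, Matrix.mul_assoc Mᴴ Nᴴ H4, hM3, hN3,
        Matrix.mul_neg, Matrix.mul_neg, ← Matrix.mul_assoc, ← Matrix.mul_assoc,
        hM3, hN3]
      noncomm_ring

lemma cons_val_four {α : Type*} (a b c d e f : α) : ![a,b,c,d,e,f] 4 = e := rfl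
lemma cons_val_five {α : Type*} (a b c d e f : α) : ![a,b,c,d,e,f] 5 = f := rfl

noncomputable def phiM (M : Matrix (Fin 6) (Fin 6) ℝ) : Matrix (Fin 4) (Fin 4) ℂ :=
  !![(((1/2) * M 0 1 + (1/2) * M 2 3 + (-1/2) * M 4 5 : ℝ) : ℂ) * Complex.I, (((-1/2) * M 0 2 + (1/2) * M 1 3 : ℝ) : ℂ) + (((1/2) * M 0 3 + (1/2) * M 1 2 : ℝ) : ℂ) * Complex.I, (((-1/2) * M 2 5 + (1/2) * M 3 4 : ℝ) : ℂ) + (((1/2) * M 2 4 + (1/2) * M 3 5 : ℝ) : ℂ) * Complex.I, (((-1/2) * M 0 5 + (1/2) * M 1 4 : ℝ) : ℂ) + (((1/2) * M 0 4 + (1/2) * M 1 5 : ℝ) : ℂ) * Complex.I;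
     (((1/2) * M 0 2 + (-1/2) * M 1 3 : ℝ) : ℂ) + (((1/2) * M 0 3 + (1/2) * M 1 2 : ℝ) : ℂ) * Complex.I, (((-1/2) * M 0 1 + (-1/2) * M 2 3 + (-1/2) * M 4 5 : ℝ) : ℂ) * Complex.I, (((-1/2) * M 0 5 + (-1/2) * M 1 4 : ℝ) : ℂ) + (((1/2) * M 0 4 + (-1/2) * M 1 5 : ℝ) : ℂ) * Complex.I, (((1/2) * M 2 5 + (1/2) * M 3 4 : ℝ) : ℂ) + (((-1/2) * M 2 4 + (1/2) * M 3 5 : ℝ) : ℂ) * Complex.I;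
     (((-1/2) * M 2 5 + (1/2) * M 3 4 : ℝ) : ℂ) + (((-1/2) * M 2 4 + (-1/2) * M 3 5 : ℝ) : ℂ) * Complex.I, (((-1/2) * M 0 5 + (-1/2) * M 1 4 : ℝ) : ℂ) + (((-1/2) * M 0 4 + (1/2) * M 1 5 : ℝ) : ℂ) * Complex.I, (((1/2) * M 0 1 + (-1/2) * M 2 3 + (1/2) * M 4 5 : ℝ) : ℂ) * Complex.I, (((-1/2) * M 0 2 + (-1/2) * M 1 3 : ℝ) : ℂ) + (((-1/2) * M 0 3 + (1/2) * M 1 2 : ℝ) : ℂ) * Complex.I;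
     (((-1/2) * M 0 5 + (1/2) * M 1 4 : ℝ) : ℂ) + (((-1/2) * M 0 4 + (-1/2) * M 1 5 : ℝ) : ℂ) * Complex.I, (((1/2) * M 2 5 + (1/2) * M 3 4 : ℝ) : ℂ) + (((1/2) * M 2 4 + (-1/2) * M 3 5 : ℝ) : ℂ) * Complex.I, (((1/2) * M 0 2 + (1/2) * M 1 3 : ℝ) : ℂ) + (((-1/2) * M 0 3 + (1/2) * M 1 2 : ℝ) : ℂ) * Complex.I, (((-1/2) * M 0 1 + (1/2) * M 2 3 + (1/2) * M 4 5 : ℝ) : ℂ) * Complex.I]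

noncomputable def psiX (X : Matrix (Fin 4) (Fin 4) ℂ) : Matrix (Fin 6) (Fin 6) ℝ :=
  !![0, (1/2) * (X 0 0).im + (-1/2) * (X 1 1).im + (1/2) * (X 2 2).im + (-1/2) * (X 3 3).im, (-1/2) * (X 0 1).re + (1/2) * (X 1 0).re + (-1/2) * (X 2 3).re + (1/2) * (X 3 2).re, (1/2) * (X 0 1).im + (1/2) * (X 1 0).im + (-1/2) * (X 2 3).im + (-1/2) * (X 3 2).im, (1/2) * (X 0 3).im + (1/2) * (X 1 2).im + (-1/2) * (X 2 1).im + (-1/2) * (X 3 0).im, (-1/2) * (X 0 3).re + (-1/2) * (X 1 2).re + (-1/2) * (X 2 1).re + (-1/2) * (X 3 0).re;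
     (-1/2) * (X 0 0).im + (1/2) * (X 1 1).im + (-1/2) * (X 2 2).im + (1/2) * (X 3 3).im, 0, (1/2) * (X 0 1).im + (1/2) * (X 1 0).im + (1/2) * (X 2 3).im + (1/2) * (X 3 2).im, (1/2) * (X 0 1).re + (-1/2) * (X 1 0).re + (-1/2) * (X 2 3).re + (1/2) * (X 3 2).re, (1/2) * (X 0 3).re + (-1/2) * (X 1 2).re + (-1/2) * (X 2 1).re + (1/2) * (X 3 0).re, (1/2) * (X 0 3).im + (-1/2) * (X 1 2).im + (1/2) * (X 2 1).im + (-1/2) * (X 3 0).im;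
     (1/2) * (X 0 1).re + (-1/2) * (X 1 0).re + (1/2) * (X 2 3).re + (-1/2) * (X 3 2).re, (-1/2) * (X 0 1).im + (-1/2) * (X 1 0).im + (-1/2) * (X 2 3).im + (-1/2) * (X 3 2).im, 0, (1/2) * (X 0 0).im + (-1/2) * (X 1 1).im + (-1/2) * (X 2 2).im + (1/2) * (X 3 3).im, (1/2) * (X 0 2).im + (-1/2) * (X 1 3).im + (-1/2) * (X 2 0).im + (1/2) * (X 3 1).im, (-1/2) * (X 0 2).re + (1/2) * (X 1 3).re + (-1/2) * (X 2 0).re + (1/2) * (X 3 1).re;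
     (-1/2) * (X 0 1).im + (-1/2) * (X 1 0).im + (1/2) * (X 2 3).im + (1/2) * (X 3 2).im, (-1/2) * (X 0 1).re + (1/2) * (X 1 0).re + (1/2) * (X 2 3).re + (-1/2) * (X 3 2).re, (-1/2) * (X 0 0).im + (1/2) * (X 1 1).im + (1/2) * (X 2 2).im + (-1/2) * (X 3 3).im, 0, (1/2) * (X 0 2).re + (1/2) * (X 1 3).re + (1/2) * (X 2 0).re + (1/2) * (X 3 1).re, (1/2) * (X 0 2).im + (1/2) * (X 1 3).im + (-1/2) * (X 2 0).im + (-1/2) * (X 3 1).im;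
     (1/2) * (X 0 3).im + (1/2) * (X 1 2).im + (-1/2) * (X 2 1).im + (-1/2) * (X 3 0).im, (1/2) * (X 0 3).re + (-1/2) * (X 1 2).re + (-1/2) * (X 2 1).re + (1/2) * (X 3 0).re, (1/2) * (X 0 2).im + (-1/2) * (X 1 3).im + (-1/2) * (X 2 0).im + (1/2) * (X 3 1).im, (1/2) * (X 0 2).re + (1/2) * (X 1 3).re + (1/2) * (X 2 0).re + (1/2) * (X 3 1).re, 0, (-1/2) * (X 0 0).im + (-1/2) * (X 1 1).im + (1/2) * (X 2 2).im + (1/2) * (X 3 3).im;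
     (-1/2) * (X 0 3).re + (-1/2) * (X 1 2).re + (-1/2) * (X 2 1).re + (-1/2) * (X 3 0).re, (1/2) * (X 0 3).im + (-1/2) * (X 1 2).im + (1/2) * (X 2 1).im + (-1/2) * (X 3 0).im, (-1/2) * (X 0 2).re + (1/2) * (X 1 3).re + (-1/2) * (X 2 0).re + (1/2) * (X 3 1).re, (1/2) * (X 0 2).im + (1/2) * (X 1 3).im + (-1/2) * (X 2 0).im + (-1/2) * (X 3 1).im, (1/2) * (X 0 0).im + (1/2) * (X 1 1).im + (-1/2) * (X 2 2).im + (-1/2) * (X 3 3).im, 0]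

lemma phiM_a00 (M : Matrix (Fin 6) (Fin 6) ℝ) : phiM M 0 0 = (((1/2) * M 0 1 + (1/2) * M 2 3 + (-1/2) * M 4 5 : ℝ) : ℂ) * Complex.I := rfl
lemma phiM_a01 (M : Matrix (Fin 6) (Fin 6) ℝ) : phiM M 0 1 = (((-1/2) * M 0 2 + (1/2) * M 1 3 : ℝ) : ℂ) + (((1/2) * M 0 3 + (1/2) * M 1 2 : ℝ) : ℂ) * Complex.I := rfl
lemma phiM_a02 (M : Matrix (Fin 6) (Fin 6) ℝ) : phiM M 0 2 = (((-1/2) * M 2 5 + (1/2) * M 3 4 : ℝ) : ℂ) + (((1/2) * M 2 4 + (1/2) * M 3 5 : ℝ) : ℂ) * Complex.I := rfl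
lemma phiM_a03 (M : Matrix (Fin 6) (Fin 6) ℝ) : phiM M 0 3 = (((-1/2) * M 0 5 + (1/2) * M 1 4 : ℝ) : ℂ) + (((1/2) * M 0 4 + (1/2) * M 1 5 : ℝ) : ℂ) * Complex.I := rfl
lemma phiM_a10 (M : Matrix (Fin 6) (Fin 6) ℝ) : phiM M 1 0 = (((1/2) * M 0 2 + (-1/2) * M 1 3 : ℝ) : ℂ) + (((1/2) * M 0 3 + (1/2) * M 1 2 : ℝ) : ℂ) * Complex.I := rfl
lemma phiM_a11 (M : Matrix (Fin 6) (Fin 6) ℝ) : phiM M 1 1 = (((-1/2) * M 0 1 + (-1/2) * M 2 3 + (-1/2) * M 4 5 : ℝ) : ℂ) * Complex.I := rfl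
lemma phiM_a12 (M : Matrix (Fin 6) (Fin 6) ℝ) : phiM M 1 2 = (((-1/2) * M 0 5 + (-1/2) * M 1 4 : ℝ) : ℂ) + (((1/2) * M 0 4 + (-1/2) * M 1 5 : ℝ) : ℂ) * Complex.I := rfl
lemma phiM_a13 (M : Matrix (Fin 6) (Fin 6) ℝ) : phiM M 1 3 = (((1/2) * M 2 5 + (1/2) * M 3 4 : ℝ) : ℂ) + (((-1/2) * M 2 4 + (1/2) * M 3 5 : ℝ) : ℂ) * Complex.I := rfl
lemma phiM_a20 (M : Matrix (Fin 6) (Fin 6) ℝ) : phiM M 2 0 = (((-1/2) * M 2 5 + (1/2) * M 3 4 : ℝ) : ℂ) + (((-1/2) * M 2 4 + (-1/2) * M 3 5 : ℝ) : ℂ) * Complex.I := rfl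
lemma phiM_a21 (M : Matrix (Fin 6) (Fin 6) ℝ) : phiM M 2 1 = (((-1/2) * M 0 5 + (-1/2) * M 1 4 : ℝ) : ℂ) + (((-1/2) * M 0 4 + (1/2) * M 1 5 : ℝ) : ℂ) * Complex.I := rfl
lemma phiM_a22 (M : Matrix (Fin 6) (Fin 6) ℝ) : phiM M 2 2 = (((1/2) * M 0 1 + (-1/2) * M 2 3 + (1/2) * M 4 5 : ℝ) : ℂ) * Complex.I := rfl
lemma phiM_a23 (M : Matrix (Fin 6) (Fin 6) ℝ) : phiM M 2 3 = (((-1/2) * M 0 2 + (-1/2) * M 1 3 : ℝ) : ℂ) + (((-1/2) * M 0 3 + (1/2) * M 1 2 : ℝ) : ℂ) * Complex.I := rfl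
lemma phiM_a30 (M : Matrix (Fin 6) (Fin 6) ℝ) : phiM M 3 0 = (((-1/2) * M 0 5 + (1/2) * M 1 4 : ℝ) : ℂ) + (((-1/2) * M 0 4 + (-1/2) * M 1 5 : ℝ) : ℂ) * Complex.I := rfl
lemma phiM_a31 (M : Matrix (Fin 6) (Fin 6) ℝ) : phiM M 3 1 = (((1/2) * M 2 5 + (1/2) * M 3 4 : ℝ) : ℂ) + (((1/2) * M 2 4 + (-1/2) * M 3 5 : ℝ) : ℂ) * Complex.I := rfl
lemma phiM_a32 (M : Matrix (Fin 6) (Fin 6) ℝ) : phiM M 3 2 = (((1/2) * M 0 2 + (1/2) * M 1 3 : ℝ) : ℂ) + (((-1/2) * M 0 3 + (1/2) * M 1 2 : ℝ) : ℂ) * Complex.I := rfl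
lemma phiM_a33 (M : Matrix (Fin 6) (Fin 6) ℝ) : phiM M 3 3 = (((-1/2) * M 0 1 + (1/2) * M 2 3 + (1/2) * M 4 5 : ℝ) : ℂ) * Complex.I := rfl
lemma psiX_a00 (X : Matrix (Fin 4) (Fin 4) ℂ) : psiX X 0 0 = 0 := rfl
lemma psiX_a01 (X : Matrix (Fin 4) (Fin 4) ℂ) : psiX X 0 1 = (1/2) * (X 0 0).im + (-1/2) * (X 1 1).im + (1/2) * (X 2 2).im + (-1/2) * (X 3 3).im := rfl
lemma psiX_a02 (X : Matrix (Fin 4) (Fin 4) ℂ) : psiX X 0 2 = (-1/2) * (X 0 1).re + (1/2) * (X 1 0).re + (-1/2) * (X 2 3).re + (1/2) * (X 3 2).re := rfl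
lemma psiX_a03 (X : Matrix (Fin 4) (Fin 4) ℂ) : psiX X 0 3 = (1/2) * (X 0 1).im + (1/2) * (X 1 0).im + (-1/2) * (X 2 3).im + (-1/2) * (X 3 2).im := rfl
lemma psiX_a04 (X : Matrix (Fin 4) (Fin 4) ℂ) : psiX X 0 4 = (1/2) * (X 0 3).im + (1/2) * (X 1 2).im + (-1/2) * (X 2 1).im + (-1/2) * (X 3 0).im := rfl
lemma psiX_a05 (X : Matrix (Fin 4) (Fin 4) ℂ) : psiX X 0 5 = (-1/2) * (X 0 3).re + (-1/2) * (X 1 2).re + (-1/2) * (X 2 1).re + (-1/2) * (X 3 0).re := rfl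
lemma psiX_a10 (X : Matrix (Fin 4) (Fin 4) ℂ) : psiX X 1 0 = (-1/2) * (X 0 0).im + (1/2) * (X 1 1).im + (-1/2) * (X 2 2).im + (1/2) * (X 3 3).im := rfl
lemma psiX_a11 (X : Matrix (Fin 4) (Fin 4) ℂ) : psiX X 1 1 = 0 := rfl
lemma psiX_a12 (X : Matrix (Fin 4) (Fin 4) ℂ) : psiX X 1 2 = (1/2) * (X 0 1).im + (1/2) * (X 1 0).im + (1/2) * (X 2 3).im + (1/2) * (X 3 2).im := rfl
lemma psiX_a13 (X : Matrix (Fin 4) (Fin 4) ℂ) : psiX X 1 3 = (1/2) * (X 0 1).re + (-1/2) * (X 1 0).re + (-1/2) * (X 2 3).re + (1/2) * (X 3 2).re := rfl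
lemma psiX_a14 (X : Matrix (Fin 4) (Fin 4) ℂ) : psiX X 1 4 = (1/2) * (X 0 3).re + (-1/2) * (X 1 2).re + (-1/2) * (X 2 1).re + (1/2) * (X 3 0).re := rfl
lemma psiX_a15 (X : Matrix (Fin 4) (Fin 4) ℂ) : psiX X 1 5 = (1/2) * (X 0 3).im + (-1/2) * (X 1 2).im + (1/2) * (X 2 1).im + (-1/2) * (X 3 0).im := rfl
lemma psiX_a20 (X : Matrix (Fin 4) (Fin 4) ℂ) : psiX X 2 0 = (1/2) * (X 0 1).re + (-1/2) * (X 1 0).re + (1/2) * (X 2 3).re + (-1/2) * (X 3 2).re := rfl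
lemma psiX_a21 (X : Matrix (Fin 4) (Fin 4) ℂ) : psiX X 2 1 = (-1/2) * (X 0 1).im + (-1/2) * (X 1 0).im + (-1/2) * (X 2 3).im + (-1/2) * (X 3 2).im := rfl
lemma psiX_a22 (X : Matrix (Fin 4) (Fin 4) ℂ) : psiX X 2 2 = 0 := rfl
lemma psiX_a23 (X : Matrix (Fin 4) (Fin 4) ℂ) : psiX X 2 3 = (1/2) * (X 0 0).im + (-1/2) * (X 1 1).im + (-1/2) * (X 2 2).im + (1/2) * (X 3 3).im := rfl
lemma psiX_a24 (X : Matrix (Fin 4) (Fin 4) ℂ) : psiX X 2 4 = (1/2) * (X 0 2).im + (-1/2) * (X 1 3).im + (-1/2) * (X 2 0).im + (1/2) * (X 3 1).im := rfl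
lemma psiX_a25 (X : Matrix (Fin 4) (Fin 4) ℂ) : psiX X 2 5 = (-1/2) * (X 0 2).re + (1/2) * (X 1 3).re + (-1/2) * (X 2 0).re + (1/2) * (X 3 1).re := rfl
lemma psiX_a30 (X : Matrix (Fin 4) (Fin 4) ℂ) : psiX X 3 0 = (-1/2) * (X 0 1).im + (-1/2) * (X 1 0).im + (1/2) * (X 2 3).im + (1/2) * (X 3 2).im := rfl
lemma psiX_a31 (X : Matrix (Fin 4) (Fin 4) ℂ) : psiX X 3 1 = (-1/2) * (X 0 1).re + (1/2) * (X 1 0).re + (1/2) * (X 2 3).re + (-1/2) * (X 3 2).re := rfl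
lemma psiX_a32 (X : Matrix (Fin 4) (Fin 4) ℂ) : psiX X 3 2 = (-1/2) * (X 0 0).im + (1/2) * (X 1 1).im + (1/2) * (X 2 2).im + (-1/2) * (X 3 3).im := rfl
lemma psiX_a33 (X : Matrix (Fin 4) (Fin 4) ℂ) : psiX X 3 3 = 0 := rfl
lemma psiX_a34 (X : Matrix (Fin 4) (Fin 4) ℂ) : psiX X 3 4 = (1/2) * (X 0 2).re + (1/2) * (X 1 3).re + (1/2) * (X 2 0).re + (1/2) * (X 3 1).re := rfl
lemma psiX_a35 (X : Matrix (Fin 4) (Fin 4) ℂ) : psiX X 3 5 = (1/2) * (X 0 2).im + (1/2) * (X 1 3).im + (-1/2) * (X 2 0).im + (-1/2) * (X 3 1).im := rfl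
lemma psiX_a40 (X : Matrix (Fin 4) (Fin 4) ℂ) : psiX X 4 0 = (1/2) * (X 0 3).im + (1/2) * (X 1 2).im + (-1/2) * (X 2 1).im + (-1/2) * (X 3 0).im := rfl
lemma psiX_a41 (X : Matrix (Fin 4) (Fin 4) ℂ) : psiX X 4 1 = (1/2) * (X 0 3).re + (-1/2) * (X 1 2).re + (-1/2) * (X 2 1).re + (1/2) * (X 3 0).re := rfl
lemma psiX_a42 (X : Matrix (Fin 4) (Fin 4) ℂ) : psiX X 4 2 = (1/2) * (X 0 2).im + (-1/2) * (X 1 3).im + (-1/2) * (X 2 0).im + (1/2) * (X 3 1).im := rfl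
lemma psiX_a43 (X : Matrix (Fin 4) (Fin 4) ℂ) : psiX X 4 3 = (1/2) * (X 0 2).re + (1/2) * (X 1 3).re + (1/2) * (X 2 0).re + (1/2) * (X 3 1).re := rfl
lemma psiX_a44 (X : Matrix (Fin 4) (Fin 4) ℂ) : psiX X 4 4 = 0 := rfl
lemma psiX_a45 (X : Matrix (Fin 4) (Fin 4) ℂ) : psiX X 4 5 = (-1/2) * (X 0 0).im + (-1/2) * (X 1 1).im + (1/2) * (X 2 2).im + (1/2) * (X 3 3).im := rfl
lemma psiX_a50 (X : Matrix (Fin 4) (Fin 4) ℂ) : psiX X 5 0 = (-1/2) * (X 0 3).re + (-1/2) * (X 1 2).re + (-1/2) * (X 2 1).re + (-1/2) * (X 3 0).re := rfl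
lemma psiX_a51 (X : Matrix (Fin 4) (Fin 4) ℂ) : psiX X 5 1 = (1/2) * (X 0 3).im + (-1/2) * (X 1 2).im + (1/2) * (X 2 1).im + (-1/2) * (X 3 0).im := rfl
lemma psiX_a52 (X : Matrix (Fin 4) (Fin 4) ℂ) : psiX X 5 2 = (-1/2) * (X 0 2).re + (1/2) * (X 1 3).re + (-1/2) * (X 2 0).re + (1/2) * (X 3 1).re := rfl
lemma psiX_a53 (X : Matrix (Fin 4) (Fin 4) ℂ) : psiX X 5 3 = (1/2) * (X 0 2).im + (1/2) * (X 1 3).im + (-1/2) * (X 2 0).im + (-1/2) * (X 3 1).im := rfl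
lemma psiX_a54 (X : Matrix (Fin 4) (Fin 4) ℂ) : psiX X 5 4 = (1/2) * (X 0 0).im + (1/2) * (X 1 1).im + (-1/2) * (X 2 2).im + (-1/2) * (X 3 3).im := rfl
lemma psiX_a55 (X : Matrix (Fin 4) (Fin 4) ℂ) : psiX X 5 5 = 0 := rfl
lemma eta6_a00 : eta6 0 0 = 1 := by simp [eta6, Matrix.diagonal_apply, _root_.cons_val_four, _root_.cons_val_five]
lemma eta6_a01 : eta6 0 1 = 0 := by simp [eta6, Matrix.diagonal_apply, _root_.cons_val_four, _root_.cons_val_five]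
lemma eta6_a02 : eta6 0 2 = 0 := by simp [eta6, Matrix.diagonal_apply, _root_.cons_val_four, _root_.cons_val_five]
lemma eta6_a03 : eta6 0 3 = 0 := by simp [eta6, Matrix.diagonal_apply, _root_.cons_val_four, _root_.cons_val_five]
lemma eta6_a04 : eta6 0 4 = 0 := by simp [eta6, Matrix.diagonal_apply, _root_.cons_val_four, _root_.cons_val_five]
lemma eta6_a05 : eta6 0 5 = 0 := by simp [eta6, Matrix.diagonal_apply, _root_.cons_val_four, _root_.cons_val_five]
lemma eta6_a10 : eta6 1 0 = 0 := by simp [eta6, Matrix.diagonal_apply, _root_.cons_val_four, _root_.cons_val_five]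
lemma eta6_a11 : eta6 1 1 = 1 := by simp [eta6, Matrix.diagonal_apply, _root_.cons_val_four, _root_.cons_val_five]
lemma eta6_a12 : eta6 1 2 = 0 := by simp [eta6, Matrix.diagonal_apply, _root_.cons_val_four, _root_.cons_val_five]
lemma eta6_a13 : eta6 1 3 = 0 := by simp [eta6, Matrix.diagonal_apply, _root_.cons_val_four, _root_.cons_val_five]
lemma eta6_a14 : eta6 1 4 = 0 := by simp [eta6, Matrix.diagonal_apply, _root_.cons_val_four, _root_.cons_val_five]
lemma eta6_a15 : eta6 1 5 = 0 := by simp [eta6, Matrix.diagonal_apply, _root_.cons_val_four, _root_.cons_val_five]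
lemma eta6_a20 : eta6 2 0 = 0 := by simp [eta6, Matrix.diagonal_apply, _root_.cons_val_four, _root_.cons_val_five]
lemma eta6_a21 : eta6 2 1 = 0 := by simp [eta6, Matrix.diagonal_apply, _root_.cons_val_four, _root_.cons_val_five]
lemma eta6_a22 : eta6 2 2 = 1 := by simp [eta6, Matrix.diagonal_apply, _root_.cons_val_four, _root_.cons_val_five]
lemma eta6_a23 : eta6 2 3 = 0 := by simp [eta6, Matrix.diagonal_apply, _root_.cons_val_four, _root_.cons_val_five]
lemma eta6_a24 : eta6 2 4 = 0 := by simp [eta6, Matrix.diagonal_apply, _root_.cons_val_four, _root_.cons_val_five]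
lemma eta6_a25 : eta6 2 5 = 0 := by simp [eta6, Matrix.diagonal_apply, _root_.cons_val_four, _root_.cons_val_five]
lemma eta6_a30 : eta6 3 0 = 0 := by simp [eta6, Matrix.diagonal_apply, _root_.cons_val_four, _root_.cons_val_five]
lemma eta6_a31 : eta6 3 1 = 0 := by simp [eta6, Matrix.diagonal_apply, _root_.cons_val_four, _root_.cons_val_five]
lemma eta6_a32 : eta6 3 2 = 0 := by simp [eta6, Matrix.diagonal_apply, _root_.cons_val_four, _root_.cons_val_five]
lemma eta6_a33 : eta6 3 3 = 1 := by simp [eta6, Matrix.diagonal_apply, _root_.cons_val_four, _root_.cons_val_five]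
lemma eta6_a34 : eta6 3 4 = 0 := by simp [eta6, Matrix.diagonal_apply, _root_.cons_val_four, _root_.cons_val_five]
lemma eta6_a35 : eta6 3 5 = 0 := by simp [eta6, Matrix.diagonal_apply, _root_.cons_val_four, _root_.cons_val_five]
lemma eta6_a40 : eta6 4 0 = 0 := by simp [eta6, Matrix.diagonal_apply, _root_.cons_val_four, _root_.cons_val_five]
lemma eta6_a41 : eta6 4 1 = 0 := by simp [eta6, Matrix.diagonal_apply, _root_.cons_val_four, _root_.cons_val_five]
lemma eta6_a42 : eta6 4 2 = 0 := by simp [eta6, Matrix.diagonal_apply, _root_.cons_val_four, _root_.cons_val_five]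
lemma eta6_a43 : eta6 4 3 = 0 := by simp [eta6, Matrix.diagonal_apply, _root_.cons_val_four, _root_.cons_val_five]
lemma eta6_a44 : eta6 4 4 = (-1) := by simp [eta6, Matrix.diagonal_apply, _root_.cons_val_four, _root_.cons_val_five]
lemma eta6_a45 : eta6 4 5 = 0 := by simp [eta6, Matrix.diagonal_apply, _root_.cons_val_four, _root_.cons_val_five]
lemma eta6_a50 : eta6 5 0 = 0 := by simp [eta6, Matrix.diagonal_apply, _root_.cons_val_four, _root_.cons_val_five]
lemma eta6_a51 : eta6 5 1 = 0 := by simp [eta6, Matrix.diagonal_apply, _root_.cons_val_four, _root_.cons_val_five]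
lemma eta6_a52 : eta6 5 2 = 0 := by simp [eta6, Matrix.diagonal_apply, _root_.cons_val_four, _root_.cons_val_five]
lemma eta6_a53 : eta6 5 3 = 0 := by simp [eta6, Matrix.diagonal_apply, _root_.cons_val_four, _root_.cons_val_five]
lemma eta6_a54 : eta6 5 4 = 0 := by simp [eta6, Matrix.diagonal_apply, _root_.cons_val_four, _root_.cons_val_five]
lemma eta6_a55 : eta6 5 5 = (-1) := by simp [eta6, Matrix.diagonal_apply, _root_.cons_val_four, _root_.cons_val_five]

lemma so_entries {M : Matrix (Fin 6) (Fin 6) ℝ} (h : Mᵀ * eta6 + eta6 * M = 0) :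
    (M 0 0 = 0) ∧ (M 1 1 = 0) ∧ (M 2 2 = 0) ∧ (M 3 3 = 0) ∧ (M 4 4 = 0) ∧ (M 5 5 = 0) ∧ (M 1 0 = -M 0 1) ∧ (M 2 0 = -M 0 2) ∧ (M 3 0 = -M 0 3) ∧ (M 4 0 = M 0 4) ∧ (M 5 0 = M 0 5) ∧ (M 2 1 = -M 1 2) ∧ (M 3 1 = -M 1 3) ∧ (M 4 1 = M 1 4) ∧ (M 5 1 = M 1 5) ∧ (M 3 2 = -M 2 3) ∧ (M 4 2 = M 2 4) ∧ (M 5 2 = M 2 5) ∧ (M 4 3 = M 3 4) ∧ (M 5 3 = M 3 5) ∧ (M 5 4 = -M 4 5) := by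
  refine ⟨?_, ?_, ?_, ?_, ?_, ?_, ?_, ?_, ?_, ?_, ?_, ?_, ?_, ?_, ?_, ?_, ?_, ?_, ?_, ?_, ?_⟩
  · have h' := congrFun (congrFun h 0) 0
    simp [eta6, Matrix.mul_apply, Matrix.diagonal, Matrix.transpose_apply, Fin.sum_univ_six, cons_val_five] at h'
    linarith
  · have h' := congrFun (congrFun h 1) 1
    simp [eta6, Matrix.mul_apply, Matrix.diagonal, Matrix.transpose_apply, Fin.sum_univ_six, cons_val_five] at h'
    linarith
  · have h' := congrFun (congrFun h 2) 2
    simp [eta6, Matrix.mul_apply, Matrix.diagonal, Matrix.transpose_apply, Fin.sum_univ_six, cons_val_five] at h'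
    linarith
  · have h' := congrFun (congrFun h 3) 3
    simp [eta6, Matrix.mul_apply, Matrix.diagonal, Matrix.transpose_apply, Fin.sum_univ_six, cons_val_five] at h'
    linarith
  · have h' := congrFun (congrFun h 4) 4
    simp [eta6, Matrix.mul_apply, Matrix.diagonal, Matrix.transpose_apply, Fin.sum_univ_six, cons_val_five] at h'
    linarith
  · have h' := congrFun (congrFun h 5) 5
    simp [eta6, Matrix.mul_apply, Matrix.diagonal, Matrix.transpose_apply, Fin.sum_univ_six, cons_val_five] at h'
    linarith
  · have h' := congrFun (congrFun h 0) 1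
    simp [eta6, Matrix.mul_apply, Matrix.diagonal, Matrix.transpose_apply, Fin.sum_univ_six, cons_val_five] at h'
    linarith
  · have h' := congrFun (congrFun h 0) 2
    simp [eta6, Matrix.mul_apply, Matrix.diagonal, Matrix.transpose_apply, Fin.sum_univ_six, cons_val_five] at h'
    linarith
  · have h' := congrFun (congrFun h 0) 3
    simp [eta6, Matrix.mul_apply, Matrix.diagonal, Matrix.transpose_apply, Fin.sum_univ_six, cons_val_five] at h'
    linarith
  · have h' := congrFun (congrFun h 0) 4
    simp [eta6, Matrix.mul_apply, Matrix.diagonal, Matrix.transpose_apply, Fin.sum_univ_six, cons_val_five] at h'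
    linarith
  · have h' := congrFun (congrFun h 0) 5
    simp [eta6, Matrix.mul_apply, Matrix.diagonal, Matrix.transpose_apply, Fin.sum_univ_six, cons_val_five] at h'
    linarith
  · have h' := congrFun (congrFun h 1) 2
    simp [eta6, Matrix.mul_apply, Matrix.diagonal, Matrix.transpose_apply, Fin.sum_univ_six, cons_val_five] at h'
    linarith
  · have h' := congrFun (congrFun h 1) 3
    simp [eta6, Matrix.mul_apply, Matrix.diagonal, Matrix.transpose_apply, Fin.sum_univ_six, cons_val_five] at h'
    linarith
  · have h' := congrFun (congrFun h 1) 4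
    simp [eta6, Matrix.mul_apply, Matrix.diagonal, Matrix.transpose_apply, Fin.sum_univ_six, cons_val_five] at h'
    linarith
  · have h' := congrFun (congrFun h 1) 5
    simp [eta6, Matrix.mul_apply, Matrix.diagonal, Matrix.transpose_apply, Fin.sum_univ_six, cons_val_five] at h'
    linarith
  · have h' := congrFun (congrFun h 2) 3
    simp [eta6, Matrix.mul_apply, Matrix.diagonal, Matrix.transpose_apply, Fin.sum_univ_six, cons_val_five] at h'
    linarith
  · have h' := congrFun (congrFun h 2) 4
    simp [eta6, Matrix.mul_apply, Matrix.diagonal, Matrix.transpose_apply, Fin.sum_univ_six, cons_val_five] at h'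
    linarith
  · have h' := congrFun (congrFun h 2) 5
    simp [eta6, Matrix.mul_apply, Matrix.diagonal, Matrix.transpose_apply, Fin.sum_univ_six, cons_val_five] at h'
    linarith
  · have h' := congrFun (congrFun h 3) 4
    simp [eta6, Matrix.mul_apply, Matrix.diagonal, Matrix.transpose_apply, Fin.sum_univ_six, cons_val_five] at h'
    linarith
  · have h' := congrFun (congrFun h 3) 5
    simp [eta6, Matrix.mul_apply, Matrix.diagonal, Matrix.transpose_apply, Fin.sum_univ_six, cons_val_five] at h'
    linarith
  · have h' := congrFun (congrFun h 4) 5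
    simp [eta6, Matrix.mul_apply, Matrix.diagonal, Matrix.transpose_apply, Fin.sum_univ_six, cons_val_five] at h'
    linarith

lemma su_entries {X : Matrix (Fin 4) (Fin 4) ℂ} (h1 : X.trace = 0)
    (h2 : Xᴴ * H4 + H4 * X = 0) :
    ((X 0 0).re = 0) ∧ ((X 1 1).re = 0) ∧ ((X 2 2).re = 0) ∧ ((X 3 3).re = 0) ∧ (X 1 0 = -(starRingEnd ℂ) (X 0 1)) ∧ (X 2 0 = (starRingEnd ℂ) (X 0 2)) ∧ (X 3 0 = (starRingEnd ℂ) (X 0 3)) ∧ (X 2 1 = (starRingEnd ℂ) (X 1 2)) ∧ (X 3 1 = (starRingEnd ℂ) (X 1 3)) ∧ (X 3 2 = -(starRingEnd ℂ) (X 2 3)) ∧ ((X 3 3).im = -((X 0 0).im + (X 1 1).im + (X 2 2).im)) := by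
  refine ⟨?_, ?_, ?_, ?_, ?_, ?_, ?_, ?_, ?_, ?_, ?_⟩
  · have h' := congrFun (congrFun h2 0) 0
    simp [H4, Matrix.mul_apply, Matrix.diagonal, Matrix.conjTranspose_apply, Fin.sum_univ_four] at h'
    have hr := congrArg Complex.re h'
    simp [Complex.add_re, Complex.conj_re] at hr
    linarith
  · have h' := congrFun (congrFun h2 1) 1
    simp [H4, Matrix.mul_apply, Matrix.diagonal, Matrix.conjTranspose_apply, Fin.sum_univ_four] at h'
    have hr := congrArg Complex.re h'
    simp [Complex.add_re, Complex.conj_re] at hr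
    linarith
  · have h' := congrFun (congrFun h2 2) 2
    simp [H4, Matrix.mul_apply, Matrix.diagonal, Matrix.conjTranspose_apply, Fin.sum_univ_four] at h'
    have hr := congrArg Complex.re h'
    simp [Complex.add_re, Complex.conj_re] at hr
    linarith
  · have h' := congrFun (congrFun h2 3) 3
    simp [H4, Matrix.mul_apply, Matrix.diagonal, Matrix.conjTranspose_apply, Fin.sum_univ_four] at h'
    have hr := congrArg Complex.re h'
    simp [Complex.add_re, Complex.conj_re] at hr
    linarith
  · have h' := congrFun (congrFun h2 1) 0
    simp [H4, Matrix.mul_apply, Matrix.diagonal, Matrix.conjTranspose_apply, Fin.sum_univ_four] at h'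
    first
    | linear_combination h'
    | linear_combination -h'
  · have h' := congrFun (congrFun h2 2) 0
    simp [H4, Matrix.mul_apply, Matrix.diagonal, Matrix.conjTranspose_apply, Fin.sum_univ_four] at h'
    first
    | linear_combination h'
    | linear_combination -h'
  · have h' := congrFun (congrFun h2 3) 0
    simp [H4, Matrix.mul_apply, Matrix.diagonal, Matrix.conjTranspose_apply, Fin.sum_univ_four] at h'
    first
    | linear_combination h'
    | linear_combination -h'
  · have h' := congrFun (congrFun h2 2) 1
    simp [H4, Matrix.mul_apply, Matrix.diagonal, Matrix.conjTranspose_apply, Fin.sum_univ_four] at h'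
    first
    | linear_combination h'
    | linear_combination -h'
  · have h' := congrFun (congrFun h2 3) 1
    simp [H4, Matrix.mul_apply, Matrix.diagonal, Matrix.conjTranspose_apply, Fin.sum_univ_four] at h'
    first
    | linear_combination h'
    | linear_combination -h'
  · have h' := congrFun (congrFun h2 3) 2
    simp [H4, Matrix.mul_apply, Matrix.diagonal, Matrix.conjTranspose_apply, Fin.sum_univ_four] at h'
    first
    | linear_combination h'
    | linear_combination -h'
  · have hr := congrArg Complex.im h1
    simp [Matrix.trace, Fin.sum_univ_four] at hr
    linarith

lemma mem_so_iff {M : Matrix (Fin 6) (Fin 6) ℝ} :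
    M ∈ skewAdjointMatricesLieSubalgebra eta6 ↔ Mᵀ * eta6 + eta6 * M = 0 := by
  rw [mem_skewAdjointMatricesLieSubalgebra, mem_skewAdjointMatricesSubmodule]
  unfold Matrix.IsSkewAdjoint Matrix.IsAdjointPair
  constructor
  · intro h; rw [h]; simp [Matrix.mul_neg]
  · intro h; rw [Matrix.mul_neg]; exact eq_neg_of_add_eq_zero_left h

lemma phiM_trace (M : Matrix (Fin 6) (Fin 6) ℝ) : (phiM M).trace = 0 := by
  simp [Matrix.trace, Fin.sum_univ_four, phiM]
  ring

set_option maxHeartbeats 4000000 in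
lemma phiM_herm (M : Matrix (Fin 6) (Fin 6) ℝ) :
    (phiM M)ᴴ * H4 + H4 * phiM M = 0 := by
  ext i j
  simp only [Matrix.add_apply, Matrix.mul_apply, Matrix.conjTranspose_apply,
    Matrix.zero_apply, Fin.sum_univ_four]
  fin_cases i <;> fin_cases j <;>
    simp [phiM, H4, Matrix.diagonal, _root_.map_add, _root_.map_mul, Complex.conj_ofReal,
      Complex.conj_I, map_inv₀, map_ofNat, map_neg] <;>
    push_cast <;> ring_nf <;> (try simp only [Complex.I_sq]) <;> (try ring)

lemma phiM_mem (M : Matrix (Fin 6) (Fin 6) ℝ) : phiM M ∈ su22 :=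
  ⟨phiM_trace M, phiM_herm M⟩

set_option maxHeartbeats 4000000 in
lemma psiX_mem (X : Matrix (Fin 4) (Fin 4) ℂ) :
    psiX X ∈ skewAdjointMatricesLieSubalgebra eta6 := by
  rw [mem_so_iff]
  ext i j
  fin_cases i <;> fin_cases j <;>
    simp only [Fin.zero_eta, Fin.mk_one, Fin.reduceFinMk, Matrix.add_apply, Matrix.mul_apply, Matrix.transpose_apply,
      Matrix.zero_apply, Fin.sum_univ_six, psiX_a00, psiX_a01, psiX_a02, psiX_a03, psiX_a04, psiX_a05, psiX_a10, psiX_a11, psiX_a12, psiX_a13, psiX_a14, psiX_a15, psiX_a20, psiX_a21, psiX_a22, psiX_a23, psiX_a24, psiX_a25, psiX_a30, psiX_a31, psiX_a32, psiX_a33, psiX_a34, psiX_a35, psiX_a40, psiX_a41, psiX_a42, psiX_a43, psiX_a44, psiX_a45, psiX_a50, psiX_a51, psiX_a52, psiX_a53, psiX_a54, psiX_a55, eta6_a00, eta6_a01, eta6_a02, eta6_a03, eta6_a04, eta6_a05, eta6_a10, eta6_a11, eta6_a12, eta6_a13, eta6_a14, eta6_a15, eta6_a20, eta6_a21, eta6_a22,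 eta6_a23, eta6_a24, eta6_a25, eta6_a30, eta6_a31, eta6_a32, eta6_a33, eta6_a34, eta6_a35, eta6_a40, eta6_a41, eta6_a42, eta6_a43, eta6_a44, eta6_a45, eta6_a50, eta6_a51, eta6_a52, eta6_a53, eta6_a54, eta6_a55] <;>
    ring

set_option maxHeartbeats 4000000 in
lemma phiM_add (M N : Matrix (Fin 6) (Fin 6) ℝ) : phiM (M + N) = phiM M + phiM N := by
  ext i j
  simp only [Matrix.add_apply]
  fin_cases i <;> fin_cases j <;>
    simp [phiM, Matrix.add_apply] <;> push_cast <;> ring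

set_option maxHeartbeats 4000000 in
lemma phiM_smul (r : ℝ) (M : Matrix (Fin 6) (Fin 6) ℝ) : phiM (r • M) = r • phiM M := by
  ext i j
  simp only [Matrix.smul_apply]
  fin_cases i <;> fin_cases j <;>
    simp [phiM, Matrix.smul_apply, smul_eq_mul, Complex.real_smul] <;> push_cast <;> ring

set_option maxHeartbeats 40000000 in
lemma phiM_bracket {M N : Matrix (Fin 6) (Fin 6) ℝ}
    (hM : Mᵀ * eta6 + eta6 * M = 0) (hN : Nᵀ * eta6 + eta6 * N = 0) :
    phiM (M * N - N * M) = phiM M * phiM N - phiM N * phiM M := by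
  obtain ⟨hA0, hA1, hA2, hA3, hA4, hA5, hB0, hB1, hB2, hB3, hB4, hB5, hB6, hB7, hB8, hB9, hB10, hB11, hB12, hB13, hB14⟩ := so_entries hM
  obtain ⟨kA0, kA1, kA2, kA3, kA4, kA5, kB0, kB1, kB2, kB3, kB4, kB5, kB6, kB7, kB8, kB9, kB10, kB11, kB12, kB13, kB14⟩ := so_entries hN
  ext i j
  simp only [Matrix.sub_apply, Matrix.mul_apply]
  fin_cases i <;> fin_cases j <;>
    simp [phiM, Matrix.sub_apply, Matrix.mul_apply, Fin.sum_univ_six, Fin.sum_univ_four,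
      hA0, hA1, hA2, hA3, hA4, hA5, hB0, hB1, hB2, hB3, hB4, hB5, hB6, hB7, hB8, hB9, hB10, hB11, hB12, hB13, hB14, kA0, kA1, kA2, kA3, kA4, kA5, kB0, kB1, kB2, kB3, kB4, kB5, kB6, kB7, kB8, kB9, kB10, kB11, kB12, kB13, kB14] <;>
    push_cast <;> ring_nf <;> (try simp only [Complex.I_sq]) <;> (try ring)

set_option maxHeartbeats 4000000 in
lemma psiX_phiM {M : Matrix (Fin 6) (Fin 6) ℝ} (hM : Mᵀ * eta6 + eta6 * M = 0) :
    psiX (phiM M) = M := by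
  obtain ⟨hA0, hA1, hA2, hA3, hA4, hA5, hB0, hB1, hB2, hB3, hB4, hB5, hB6, hB7, hB8, hB9, hB10, hB11, hB12, hB13, hB14⟩ := so_entries hM
  ext i j
  fin_cases i <;> fin_cases j <;>
    simp only [Fin.zero_eta, Fin.mk_one, Fin.reduceFinMk, psiX_a00, psiX_a01, psiX_a02, psiX_a03, psiX_a04, psiX_a05, psiX_a10, psiX_a11, psiX_a12, psiX_a13, psiX_a14, psiX_a15, psiX_a20, psiX_a21, psiX_a22, psiX_a23, psiX_a24, psiX_a25, psiX_a30, psiX_a31, psiX_a32, psiX_a33, psiX_a34, psiX_a35, psiX_a40, psiX_a41, psiX_a42, psiX_a43, psiX_a44, psiX_a45, psiX_a50, psiX_a51, psiX_a52, psiX_a53, psiX_a54, psiX_a55, phiM_a00, phiM_a01, phiM_a02, phiM_a03, phiM_a10, phiM_a11, phiM_a12, phiM_a13, phiM_a20, phiM_a21, phiM_a22, phiM_a23, phiM_a30, phiM_a31, phiM_a32, phiM_a33, hA0, hA1, hA2, hA3, hA4, hA5, hB0, hB1, hB2, hB3, hB4, hB5, hB6, hB7, hB8, hB9, hB10, hB11,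 hB12, hB13, hB14,
      Complex.add_re, Complex.add_im, Complex.mul_re, Complex.mul_im,
      Complex.I_re, Complex.I_im, Complex.ofReal_re, Complex.ofReal_im] <;>
    ring

set_option maxHeartbeats 40000000 in
lemma phiM_psiX {X : Matrix (Fin 4) (Fin 4) ℂ} (h1 : X.trace = 0)
    (h2 : Xᴴ * H4 + H4 * X = 0) : phiM (psiX X) = X := by
  obtain ⟨hD0, hD1, hD2, hD3, hC10, hC20, hC30, hC21, hC31, hC32, hT⟩ := su_entries h1 h2
  ext i j
  fin_cases i <;> fin_cases j <;>
    (apply Complex.ext) <;>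
    simp only [Fin.zero_eta, Fin.mk_one, Fin.reduceFinMk, phiM_a00, phiM_a01, phiM_a02, phiM_a03, phiM_a10, phiM_a11, phiM_a12, phiM_a13, phiM_a20, phiM_a21, phiM_a22, phiM_a23, phiM_a30, phiM_a31, phiM_a32, phiM_a33, psiX_a00, psiX_a01, psiX_a02, psiX_a03, psiX_a04, psiX_a05, psiX_a10, psiX_a11, psiX_a12, psiX_a13, psiX_a14, psiX_a15, psiX_a20, psiX_a21, psiX_a22, psiX_a23, psiX_a24, psiX_a25, psiX_a30, psiX_a31, psiX_a32, psiX_a33, psiX_a34, psiX_a35, psiX_a40, psiX_a41, psiX_a42, psiX_a43, psiX_a44, psiX_a45, psiX_a50, psiX_a51, psiX_a52, psiX_a53, psiX_a54, psiX_a55, hC10, hC20, hC30, hC21, hC31, hC32,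
      Complex.add_re, Complex.add_im, Complex.mul_re, Complex.mul_im,
      Complex.I_re, Complex.I_im, Complex.ofReal_re, Complex.ofReal_im,
      Complex.conj_re, Complex.conj_im, Complex.neg_re, Complex.neg_im] <;>
    linarith [hD0, hD1, hD2, hD3, hT]

noncomputable def soEquivSu : (skewAdjointMatricesLieSubalgebra eta6) ≃ₗ⁅ℝ⁆ su22 where
  toFun m := ⟨phiM m.1, phiM_mem m.1⟩
  map_add' m n := Subtype.ext (phiM_add m.1 n.1)
  map_smul' r m := Subtype.ext (phiM_smul r m.1)
  map_lie' {m n} := by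
    apply Subtype.ext
    show phiM (⁅(m : Matrix (Fin 6) (Fin 6) ℝ), (n : Matrix (Fin 6) (Fin 6) ℝ)⁆) =
      ⁅phiM m.1, phiM n.1⁆
    rw [Ring.lie_def, Ring.lie_def]
    exact phiM_bracket (mem_so_iff.mp m.2) (mem_so_iff.mp n.2)
  invFun x := ⟨psiX x.1, psiX_mem x.1⟩
  left_inv m := Subtype.ext (psiX_phiM (mem_so_iff.mp m.2))
  right_inv x := Subtype.ext (phiM_psiX x.2.1 x.2.2)


/-- the real Lie algebra so(4,2) = {M ∈ M₆(ℝ) : Mᵀη + ηM = 0},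
η = diag(1,1,1,1,−1,−1), is isomorphic as a real Lie algebra to su(2,2). -/
theorem stmt13 :
    Nonempty ((skewAdjointMatricesLieSubalgebra eta6) ≃ₗ⁅ℝ⁆ su22) := by
  exact ⟨soEquivSu⟩
end
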